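/- arXiv:2501.12055 — 4 statements merged into one kernel-verified Lean document; each statement's English description precedes it below -/
import Mathlib

section
/- Every polynomial h(x) of degree n with real coefficients can be uniquely written as h(x) = a(x) + x·b(x), where a(x) satisfies x^n·a(1/x) = a(x) (i.e., a is symmetric of degree at most n) and b(x) satisfies x^(n-1)·b(1/x) = b(x) (i.e., b is symmetric of degree at most n-1). Explicitly, a(x) = (h(x) - x^(n+1)·h(1/x))/(1-x) and b(x) = (x^n·h(1/x) - h(x))/(1-x). -/
open Polynomial

private lemma reflect_reflect' {R : Type*} [Semiring R] (N : ℕ) (f : R[X]) :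
    (f.reflect N).reflect N = f := by
  ext i
  simp [coeff_reflect]

private lemma reflect_zero_id {R : Type*} [Semiring R] (f : R[X]) :
    f.reflect 0 = f := by
  ext i
  rw [coeff_reflect]
  rcases i with _ | i
  · simp
  · rw [revAt_eq_self_of_lt (Nat.succ_pos i)]

private lemma natDegree_reflect_le' {R : Type*} [Semiring R] {N : ℕ} {f : R[X]}
    (hf : f.natDegree ≤ N) : (f.reflect N).natDegree ≤ N := by
  rw [natDegree_le_iff_coeff_eq_zero]
  intro m hm
  rw [coeff_reflect, revAt_eq_self_of_lt hm]
  exact coeff_eq_zero_of_natDegree_lt (lt_of_le_of_lt hf hm)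

private lemma eval_one_reflect (N : ℕ) (f : ℝ[X]) (hf : f.natDegree ≤ N) :
    (f.reflect N).eval 1 = f.eval 1 := by
  haveI : Invertible (1 : ℝ) := invertibleOne
  have h1 := eval₂_reflect_mul_pow (RingHom.id ℝ) (1 : ℝ) N f hf
  rw [invOf_one, one_pow, mul_one] at h1
  exact h1

private lemma reflect_one_sub : (1 - X : ℝ[X]).reflect 1 = X - 1 := by
  have h1 : (1 - X : ℝ[X]) = C 1 - X := by simp
  have hX1 : (X : ℝ[X]).reflect 1 = 1 := by
    simpa using reflect_monomial 1 1 (R := ℝ)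
  rw [h1, reflect_sub, reflect_C, hX1]
  simp

private lemma reflect_X_mul (n : ℕ) (b : ℝ[X]) (hb : b.natDegree ≤ n) :
    (X * b).reflect (n + 1) = b.reflect n := by
  have h1 : (n + 1) = 1 + n := by omega
  rw [h1, reflect_mul X b natDegree_X.le hb]
  have hX1 : (X : ℝ[X]).reflect 1 = 1 := by
    simpa using reflect_monomial 1 1 (R := ℝ)
  rw [hX1, one_mul]

/-- Key lemma: any valid decomposition satisfies the explicit formulas. -/
private lemma key_lemma (n : ℕ) (h a b : ℝ[X]) (hn : h.natDegree = n)
    (hd : h = a + X * b) (ha1 : a.natDegree ≤ n) (ha2 : a.reflect n = a)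
    (hb1 : b.natDegree ≤ n - 1) (hb2 : b.reflect (n - 1) = b) :
    (1 - X) * a = h - X * h.reflect n ∧ (1 - X) * b = h.reflect n - h := by
  have hrefl : h.reflect n = a + b := by
    rcases n with _ | m
    · -- n = 0 : b must be 0
      obtain ⟨c, rfl⟩ := natDegree_eq_zero.mp (Nat.le_zero.mp hb1)
      have hc : c = 0 := by
        have e := congrArg (fun p => Polynomial.coeff p 1) hd
        have h1 : h.coeff 1 = 0 := coeff_eq_zero_of_natDegree_lt (by omega)
        have h2 : a.coeff 1 = 0 := coeff_eq_zero_of_natDegree_lt (by omega)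
        simpa [h1, h2, coeff_X_mul] using e.symm
      rw [reflect_zero_id, hd, hc]
      simp
    · rw [hd, reflect_add, reflect_X_mul m b (by simpa using hb1), ha2,
        (by simpa using hb2 : b.reflect m = b)]
  constructor
  · rw [hrefl, hd]; ring
  · rw [hrefl, hd]; ring

/-- **Symmetric decomposition** (Brändén–Solus). Every real polynomial `h` of degree `n`
can be uniquely written as `h = a + X * b` where `a` is palindromic of degree at most `n`
(`x^n a(1/x) = a(x)`, i.e. `reflect n a = a`) and `b` is palindromic of degree at most
`n - 1` (`reflect (n-1) b = b`).  Explicitly, `(1-x)·a = h - x^(n+1)·h(1/x)` and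
`(1-x)·b = x^n·h(1/x) - h`, where `x^n h(1/x) = reflect n h`. -/
theorem symmetric_decomposition (n : ℕ) (h : Polynomial ℝ) (hn : h.natDegree = n) :
    (∃! ab : Polynomial ℝ × Polynomial ℝ,
      h = ab.1 + X * ab.2 ∧
      ab.1.natDegree ≤ n ∧ ab.1.reflect n = ab.1 ∧
      ab.2.natDegree ≤ n - 1 ∧ ab.2.reflect (n - 1) = ab.2) ∧
    (∀ a b : Polynomial ℝ,
      (h = a + X * b ∧ a.natDegree ≤ n ∧ a.reflect n = a ∧
        b.natDegree ≤ n - 1 ∧ b.reflect (n - 1) = b) →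
      (1 - X) * a = h - X * h.reflect n ∧ (1 - X) * b = h.reflect n - h) := by
  have hX : (1 - X : ℝ[X]) ≠ 0 := fun hc =>
    X_sub_C_ne_zero (1 : ℝ) (by rw [map_one]; linear_combination -hc)
  have huniq : ∀ a b : ℝ[X],
      (h = a + X * b ∧ a.natDegree ≤ n ∧ a.reflect n = a ∧
        b.natDegree ≤ n - 1 ∧ b.reflect (n - 1) = b) →
      (1 - X) * a = h - X * h.reflect n ∧ (1 - X) * b = h.reflect n - h := by
    rintro a b ⟨hd, ha1, ha2, hb1, hb2⟩
    exact key_lemma n h a b hn hd ha1 ha2 hb1 hb2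
  refine ⟨?_, huniq⟩
  -- existence
  have hex : ∃ a b : ℝ[X], h = a + X * b ∧ a.natDegree ≤ n ∧ a.reflect n = a ∧
      b.natDegree ≤ n - 1 ∧ b.reflect (n - 1) = b := by
    rcases n with _ | m
    · exact ⟨h, 0, by simp, hn.le, reflect_zero_id h, by simp, by simp⟩
    · -- n = m + 1
      set g : ℝ[X] := h.reflect (m + 1) - h with hg
      have hgroot : g.IsRoot 1 := by
        simp [hg, IsRoot, eval_one_reflect (m + 1) h hn.le]
      have hgdeg : g.natDegree ≤ m + 1 :=
        le_trans (natDegree_sub_le _ _) (max_le (natDegree_reflect_le' hn.le) hn.le)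
      have hgrefl : g.reflect (m + 1) = -g := by
        rw [hg, reflect_sub, reflect_reflect']
        ring
      set b : ℝ[X] := -(g /ₘ (X - C 1)) with hb
      have hbmul : (1 - X) * b = g := by
        have hh := (mul_divByMonic_eq_iff_isRoot (p := g) (a := (1 : ℝ))).mpr hgroot
        rw [hb]
        simp only [map_one] at hh ⊢
        linear_combination hh
      have hbdeg : b.natDegree ≤ m := by
        rw [hb, natDegree_neg, natDegree_divByMonic g (monic_X_sub_C 1),
          natDegree_X_sub_C]
        omega
      have hbrefl : b.reflect m = b := by
        have h1 : ((1 - X) * b).reflect (m + 1) = (X - 1) * b.reflect m := by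
          rw [(by omega : m + 1 = 1 + m),
            reflect_mul (1 - X) b (le_trans (natDegree_sub_le _ _) (by simp)) hbdeg,
            reflect_one_sub]
        rw [hbmul, hgrefl, ← hbmul] at h1
        have h2 : (X - 1 : ℝ[X]) * b = (X - 1) * b.reflect m := by
          linear_combination h1
        exact (mul_left_cancel₀
          (fun hc => hX (by linear_combination -hc)) h2).symm
      set a : ℝ[X] := h - X * b with ha
      have harefl : a.reflect (m + 1) = a := by
        rw [ha, reflect_sub, reflect_X_mul m b hbdeg, hbrefl]
        have h3 : h.reflect (m + 1) = g + h := by rw [hg]; ring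
        rw [h3]
        linear_combination -hbmul
      have hadeg : a.natDegree ≤ m + 1 := by
        refine le_trans (natDegree_sub_le _ _)
          (max_le hn.le (le_trans natDegree_mul_le ?_))
        rw [natDegree_X]
        omega
      exact ⟨a, b, by rw [ha]; ring, hadeg, harefl, by simpa using hbdeg,
        by simpa using hbrefl⟩
  obtain ⟨a, b, hprop⟩ := hex
  refine ⟨(a, b), hprop, ?_⟩
  rintro ⟨a', b'⟩ hprop'
  obtain ⟨e1, e2⟩ := huniq a' b' hprop'
  obtain ⟨f1, f2⟩ := huniq a b hprop
  have hA : a' = a := mul_left_cancel₀ hX (e1.trans f1.symm)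
  have hB : b' = b := mul_left_cancel₀ hX (e2.trans f2.symm)
  simp [hA, hB]
end

section
/- If a polynomial h(x) = a(x) + x·b(x) is bi-γ-positive, i.e., a(x) = Σ_k γ_k x^k (1+x)^(n-2k) and b(x) = Σ_k δ_k x^k (1+x)^(n-1-2k) with all γ_k, δ_k ≥ 0, then h is alternating increasing: its coefficients satisfy a_0 ≤ a_n ≤ a_1 ≤ a_{n-1} ≤ ... ≤ a_{⌊(n+1)/2⌋}. -/
open Polynomial

private lemma choose_step {N k : ℕ} (hk : 2 * k + 1 ≤ N) :
    N.choose k ≤ N.choose (k + 1) := by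
  rcases eq_or_lt_of_le hk with h | h
  · have h1 : k ≤ N := by omega
    have : N - k = k + 1 := by omega
    rw [← this, Nat.choose_symm h1]
  · exact Nat.choose_le_succ_of_lt_half_left (by omega)

private lemma coeff_gsum (m M : ℕ) (w : ℕ → ℝ) (j : ℕ) :
    (∑ i ∈ Finset.range M, C (w i) * X ^ i * (1 + X) ^ (m - 2 * i)).coeff j =
      ∑ i ∈ Finset.range M,
        w i * (if i ≤ j then (((m - 2 * i).choose (j - i)) : ℝ) else 0) := by
  rw [finset_sum_coeff]
  refine Finset.sum_congr rfl fun i _ => ?_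
  rw [mul_assoc, coeff_C_mul, mul_comm (X ^ i), coeff_mul_X_pow']
  split
  · rw [coeff_one_add_X_pow]
  · rfl

private lemma gsum_nonneg (m : ℕ) (w : ℕ → ℝ) (hw : ∀ i, 0 ≤ w i) (j : ℕ) :
    0 ≤ ∑ i ∈ Finset.range (m / 2 + 1),
        w i * (if i ≤ j then (((m - 2 * i).choose (j - i)) : ℝ) else 0) := by
  refine Finset.sum_nonneg fun i _ => mul_nonneg (hw i) ?_
  split <;> positivity

private lemma gsum_symm (m : ℕ) (w : ℕ → ℝ) {j : ℕ} (hj : j ≤ m) :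
    ∑ i ∈ Finset.range (m / 2 + 1),
        w i * (if i ≤ j then (((m - 2 * i).choose (j - i)) : ℝ) else 0) =
    ∑ i ∈ Finset.range (m / 2 + 1),
        w i * (if i ≤ m - j then (((m - 2 * i).choose (m - j - i)) : ℝ) else 0) := by
  refine Finset.sum_congr rfl fun i hi => ?_
  have h2i : 2 * i ≤ m := by
    have := Finset.mem_range.mp hi; omega
  congr 1
  by_cases h1 : i ≤ j <;> by_cases h2 : i ≤ m - j <;>
    simp only [h1, h2, if_true, if_false, ite_true, ite_false]
  · have hle : j - i ≤ m - 2 * i := by omega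
    have : m - j - i = (m - 2 * i) - (j - i) := by omega
    rw [this, Nat.choose_symm hle]
  · -- i ≤ j, ¬ i ≤ m - j : then j - i > m - 2*i
    rw [Nat.choose_eq_zero_of_lt (by omega), Nat.cast_zero]
  · rw [Nat.choose_eq_zero_of_lt (by omega), Nat.cast_zero]

private lemma gsum_mono (m : ℕ) (w : ℕ → ℝ) (hw : ∀ i, 0 ≤ w i) {j : ℕ}
    (hj : 2 * j + 1 ≤ m) :
    ∑ i ∈ Finset.range (m / 2 + 1),
        w i * (if i ≤ j then (((m - 2 * i).choose (j - i)) : ℝ) else 0) ≤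
    ∑ i ∈ Finset.range (m / 2 + 1),
        w i * (if i ≤ j + 1 then (((m - 2 * i).choose (j + 1 - i)) : ℝ) else 0) := by
  refine Finset.sum_le_sum fun i hi => ?_
  have h2i : 2 * i ≤ m := by
    have := Finset.mem_range.mp hi; omega
  refine mul_le_mul_of_nonneg_left ?_ (hw i)
  by_cases h1 : i ≤ j
  · rw [if_pos h1, if_pos (by omega)]
    have : j + 1 - i = (j - i) + 1 := by omega
    rw [this]
    exact_mod_cast choose_step (N := m - 2 * i) (k := j - i) (by omega)
  · rw [if_neg h1]
    split <;> positivity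

/-- If `h = a + x·b` is bi-γ-positive, i.e. `a = Σ γ_k x^k (1+x)^(n-2k)` and
`b = Σ δ_k x^k (1+x)^(n-1-2k)` with all `γ_k, δ_k ≥ 0`, then `h` is alternating
increasing: `a_0 ≤ a_n ≤ a_1 ≤ a_{n-1} ≤ ⋯ ≤ a_{⌊(n+1)/2⌋}`. -/
theorem bi_gamma_positive_alternating_increasing (n : ℕ) (h : Polynomial ℝ)
    (γ δ : ℕ → ℝ) (hγ : ∀ i, 0 ≤ γ i) (hδ : ∀ i, 0 ≤ δ i)
    (hh : h =
      (∑ i ∈ Finset.range (n / 2 + 1), C (γ i) * X ^ i * (1 + X) ^ (n - 2 * i)) +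
      X * ∑ i ∈ Finset.range ((n - 1) / 2 + 1),
        C (δ i) * X ^ i * (1 + X) ^ (n - 1 - 2 * i)) :
    (∀ j : ℕ, 2 * j ≤ n → h.coeff j ≤ h.coeff (n - j)) ∧
    (∀ j : ℕ, 2 * j + 1 ≤ n → h.coeff (n - j) ≤ h.coeff (j + 1)) := by
  set A : ℕ → ℝ := fun j => ∑ i ∈ Finset.range (n / 2 + 1),
      γ i * (if i ≤ j then (((n - 2 * i).choose (j - i)) : ℝ) else 0) with hA
  set B : ℕ → ℝ := fun j => ∑ i ∈ Finset.range ((n - 1) / 2 + 1),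
      δ i * (if i ≤ j then ((((n - 1) - 2 * i).choose (j - i)) : ℝ) else 0) with hB
  have hcoeff : ∀ j : ℕ, h.coeff j = A j + (if 1 ≤ j then B (j - 1) else 0) := by
    intro j
    rw [hh, coeff_add, coeff_gsum]
    congr 1
    rcases Nat.eq_zero_or_pos j with rfl | hj
    · simp [mul_coeff_zero]
    · obtain ⟨k, rfl⟩ := Nat.exists_eq_add_of_le hj
      rw [if_pos (by omega)]
      have e1 : 1 + k = k + 1 := by omega
      rw [e1, coeff_X_mul, coeff_gsum]
      have e2 : k + 1 - 1 = k := by omega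
      rw [e2, hB]
  constructor
  · intro j hj
    rw [hcoeff, hcoeff]
    have hsymA : A j = A (n - j) := gsum_symm n γ (by omega)
    rcases Nat.eq_zero_or_pos j with rfl | hj1
    · simp only [Nat.sub_zero] at hsymA ⊢
      rw [hsymA, if_neg (by omega : ¬ (1:ℕ) ≤ 0), add_zero]
      have hpos : (0:ℝ) ≤ if 1 ≤ n then B (n - 1) else 0 := by
        split
        · exact gsum_nonneg _ δ hδ _
        · exact le_refl 0
      linarith
    · rw [if_pos (by omega : 1 ≤ j), if_pos (by omega : 1 ≤ n - j)]
      have h1 : B (j - 1) ≤ B j := by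
        have hm := gsum_mono (n - 1) δ hδ (j := j - 1) (by omega)
        have e : j - 1 + 1 = j := by omega
        rw [e] at hm; exact hm
      have h2 : B j = B (n - j - 1) := by
        have hs := gsum_symm (n - 1) δ (j := j) (by omega)
        have e : n - 1 - j = n - j - 1 := by omega
        rw [e] at hs; exact hs
      rw [hsymA]
      linarith
  · intro j hj
    rw [hcoeff, hcoeff]
    have hsymA : A (n - j) = A j := (gsum_symm n γ (j := j) (by omega)).symm
    have hmonoA : A j ≤ A (j + 1) := gsum_mono n γ hγ hj
    rw [if_pos (by omega : 1 ≤ n - j), if_pos (by omega : 1 ≤ j + 1)]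
    have hBeq : B (n - j - 1) = B j := by
      have hs := gsum_symm (n - 1) δ (j := j) (by omega)
      have e : n - 1 - j = n - j - 1 := by omega
      rw [e] at hs; exact hs.symm
    have e2 : j + 1 - 1 = j := by omega
    rw [e2, hsymA, hBeq]
    linarith
end

section
/- For every n ≥ 1 and k ≥ 1, the 1/k-Eulerian polynomial satisfies A_n^{(k)}(x) = Σ_{π ∈ Q_n(k)} x^{ap(π)}, where Q_n(k) is the set of k-Stirling permutations of order n and ap(π) is the number of longest ascent-plateaux of π. -/
open Polynomial
open scoped Classical

noncomputable section

/-- Number of longest ascent-plateaux of the length-`L` word `v` (values in `ℕ`):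
indices `i` with `v i < v (i+1) = v (i+2) = ⋯ = v (i+k)`. -/
def apWord (k L : ℕ) (v : ℕ → ℕ) : ℕ :=
  ((Finset.range L).filter fun i =>
    i + k < L ∧ v i < v (i + 1) ∧ ∀ j < k, v (i + 1 + j) = v (i + 1)).card

/-- `w : Fin (k*n) → Fin n` is a `k`-Stirling permutation of order `n`: every letter
occurs exactly `k` times and letters lying between two equal letters are at least as
large. -/
def IsKStirling (k n : ℕ) (w : Fin (k * n) → Fin n) : Prop :=
  (∀ m : Fin n, (Finset.univ.filter fun i => w i = m).card = k) ∧
  (∀ i j l : Fin (k * n), i ≤ j → j ≤ l → w i = w l → w i ≤ w j)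

/-- The word (with values in `{1,…,n}` and junk value `0` out of range) associated to a
`k`-Stirling permutation. -/
def wordOf (k n : ℕ) (w : Fin (k * n) → Fin n) : ℕ → ℕ :=
  fun i => if h : i < k * n then (w ⟨i, h⟩ : ℕ) + 1 else 0

/-- The number `ap(π)` of longest ascent-plateaux of a `k`-Stirling permutation. -/
def apStat (k n : ℕ) (w : Fin (k * n) → Fin n) : ℕ :=
  apWord k (k * n) (wordOf k n w)

/-- The number `lap(π)` of left longest ascent-plateaux: longest ascent-plateaux of the
word `0π` obtained by prepending a zero. -/
def lapStat (k n : ℕ) (w : Fin (k * n) → Fin n) : ℕ :=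
  apWord k (k * n + 1) (fun i => if i = 0 then 0 else wordOf k n w (i - 1))

/-- The EGF condition `(Σ_n A_n z^n/n!)^k · (e^{kz(x-1)} - x) = 1 - x`, i.e.
`Σ_{n≥0} A_n(x) z^n/n! = ((1-x)/(e^{kz(x-1)} - x))^{1/k}`. -/
def EGFcond (k : ℕ) (A : ℕ → Polynomial ℝ) : Prop :=
  (PowerSeries.mk fun n => ((n.factorial : ℝ)⁻¹) • A n) ^ k *
      ((PowerSeries.mk fun n => ((n.factorial : ℝ)⁻¹) • ((C (k : ℝ)) * (X - 1)) ^ n) -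
        (PowerSeries.C : Polynomial ℝ →+* PowerSeries (Polynomial ℝ)) X) =
    (PowerSeries.C : Polynomial ℝ →+* PowerSeries (Polynomial ℝ)) (1 - X)


namespace SPaux

def apSet (k L : ℕ) (v : ℕ → ℕ) : Finset ℕ :=
  (Finset.range L).filter fun i =>
    i + k < L ∧ v i < v (i + 1) ∧ ∀ j < k, v (i + 1 + j) = v (i + 1)

lemma apWord_eq_card (k L : ℕ) (v : ℕ → ℕ) : apWord k L v = (apSet k L v).card := rfl

lemma mem_apSet {k L : ℕ} {v : ℕ → ℕ} {m : ℕ} :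
    m ∈ apSet k L v ↔ m + k < L ∧ v m < v (m + 1) ∧ ∀ j < k, v (m + 1 + j) = v (m + 1) := by
  constructor
  · intro h
    exact (Finset.mem_filter.mp h).2
  · intro h
    refine Finset.mem_filter.mpr ⟨Finset.mem_range.mpr ?_, h⟩
    omega

lemma apSet_congr {k L : ℕ} (hk : 1 ≤ k) {u v : ℕ → ℕ} (h : ∀ i < L, u i = v i) :
    apSet k L u = apSet k L v := by
  ext m
  rw [mem_apSet, mem_apSet]
  constructor <;> rintro ⟨h1, h2, h3⟩ <;> refine ⟨h1, ?_, ?_⟩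
  · rw [← h m (by omega), ← h (m+1) (by omega)]; exact h2
  · intro j hj
    rw [← h (m+1+j) (by omega), ← h (m+1) (by omega)]; exact h3 j hj
  · rw [h m (by omega), h (m+1) (by omega)]; exact h2
  · intro j hj
    rw [h (m+1+j) (by omega), h (m+1) (by omega)]; exact h3 j hj

lemma apWord_congr {k L : ℕ} (hk : 1 ≤ k) {u v : ℕ → ℕ} (h : ∀ i < L, u i = v i) :
    apWord k L u = apWord k L v := by
  rw [apWord_eq_card, apWord_eq_card, apSet_congr hk h]

lemma apSet_spacing {k L : ℕ} {v : ℕ → ℕ} {i i' : ℕ}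
    (hi : i ∈ apSet k L v) (hi' : i' ∈ apSet k L v) (h : i < i') : i + k ≤ i' := by
  by_contra hc
  push_neg at hc
  rcases mem_apSet.mp hi with ⟨_, _, h3⟩
  rcases mem_apSet.mp hi' with ⟨_, h2', _⟩
  have e1 : v i' = v (i+1) := by
    have := h3 (i' - (i+1)) (by omega)
    rwa [show i + 1 + (i' - (i+1)) = i' by omega] at this
  have e2 : v (i'+1) = v (i+1) := by
    have := h3 (i' + 1 - (i+1)) (by omega)
    rwa [show i + 1 + (i' + 1 - (i+1)) = i' + 1 by omega] at this
  rw [e1, e2] at h2'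
  exact lt_irrefl _ h2'


/-- Insert a block of `k` copies of letter `c` before position `p`. -/
def insertW (p k c : ℕ) (u : ℕ → ℕ) : ℕ → ℕ :=
  fun i => if i < p then u i else if i < p + k then c else u (i - k)

lemma insertW_lt {p k c : ℕ} {u : ℕ → ℕ} {i : ℕ} (h : i < p) : insertW p k c u i = u i := by
  simp [insertW, h]

lemma insertW_mid {p k c : ℕ} {u : ℕ → ℕ} {i : ℕ} (h1 : p ≤ i) (h2 : i < p + k) :
    insertW p k c u i = c := by
  simp [insertW, h2]; omega

lemma insertW_ge {p k c : ℕ} {u : ℕ → ℕ} {i : ℕ} (h : p + k ≤ i) :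
    insertW p k c u i = u (i - k) := by
  have h1 : ¬ i < p := by omega
  have h2 : ¬ i < p + k := by omega
  simp [insertW, h1, h2]

lemma mem_apSet_insertW {k L n p : ℕ} (hk : 1 ≤ k) (hp : p ≤ L) {u : ℕ → ℕ}
    (hu : ∀ i < L, u i ≤ n) (m : ℕ) :
    m ∈ apSet k (L + k) (insertW p k (n+1) u) ↔
      (p ≠ 0 ∧ m = p - 1) ∨ (m ∈ apSet k L u ∧ m + k < p) ∨
        (∃ i ∈ apSet k L u, p ≤ i ∧ m = i + k) := by
  set v := insertW p k (n+1) u with hv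
  by_cases hmL : m < L
  swap
  · -- m ≥ L : both sides false
    constructor
    · intro h; exact absurd (mem_apSet.mp h).1 (by omega)
    · rintro (⟨hp0, rfl⟩ | ⟨h1, h2⟩ | ⟨i, hi, hpi, rfl⟩)
      · omega
      · exact absurd (mem_apSet.mp h1).1 (by omega)
      · exact absurd (mem_apSet.mp hi).1 (by omega)
  -- m < L
  rcases Nat.lt_or_ge (m + k) p with hc1 | hc1
  · -- case 1 : window entirely below p
    have he : ∀ t ≤ k, v (m + t) = u (m + t) := fun t ht => insertW_lt (by omega)
    constructor
    · intro h
      rcases mem_apSet.mp h with ⟨_, h2, h3⟩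
      refine Or.inr (Or.inl ⟨mem_apSet.mpr ⟨by omega, ?_, ?_⟩, hc1⟩)
      · have e0 := he 0 (by omega); have e1 := he 1 hk
        rw [show m + 0 = m by omega] at e0
        rw [← e0, ← e1]; exact h2
      · intro j hj
        have := h3 j hj
        rw [he 1 hk] at this
        rw [show m + 1 + j = m + (1 + j) by omega, he (1+j) (by omega)] at this
        rw [show m + (1+j) = m + 1 + j by omega] at this
        exact this
    · rintro (⟨hp0, rfl⟩ | ⟨h1, _⟩ | ⟨i, hi, hpi, rfl⟩)
      · omega
      · rcases mem_apSet.mp h1 with ⟨hl, h2, h3⟩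
        refine mem_apSet.mpr ⟨by omega, ?_, ?_⟩
        · have e0 := he 0 (by omega); have e1 := he 1 hk
          rw [show m + 0 = m by omega] at e0
          rw [e0, e1]; exact h2
        · intro j hj
          rw [he 1 hk, show m + 1 + j = m + (1 + j) by omega, he (1+j) (by omega),
            show m + (1+j) = m + 1 + j by omega]
          exact h3 j hj
      · rcases mem_apSet.mp hi with ⟨hl, _, _⟩; omega
  rcases Nat.lt_or_ge (m + 1) p with hc2 | hc2
  · -- case 2 : m+1 < p ≤ m+k : destroyed, both sides false
    constructor
    · intro h
      rcases mem_apSet.mp h with ⟨_, h2, h3⟩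
      have e1 : v (m + 1) = u (m + 1) := insertW_lt (by omega)
      have e2 : v (m + 1 + (p - (m+1))) = n + 1 := by
        rw [show m + 1 + (p - (m+1)) = p by omega]
        exact insertW_mid (by omega) (by omega)
      have := h3 (p - (m+1)) (by omega)
      rw [e2, e1] at this
      have := hu (m+1) (by omega)
      omega
    · rintro (⟨hp0, rfl⟩ | ⟨h1, h2⟩ | ⟨i, hi, hpi, rfl⟩)
      · omega
      · omega
      · omega
  rcases Nat.lt_or_ge m p with hc3 | hc3
  · -- case 3 : m + 1 = p (new block ap)
    have hmp : m + 1 = p := by omega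
    constructor
    · intro _; exact Or.inl ⟨by omega, by omega⟩
    · intro _
      refine mem_apSet.mpr ⟨by omega, ?_, ?_⟩
      · have e0 : v m = u m := insertW_lt (by omega)
        have e1 : v (m+1) = n + 1 := insertW_mid (by omega) (by omega)
        have := hu m (by omega)
        omega
      · intro j hj
        have e1 : v (m+1) = n + 1 := insertW_mid (by omega) (by omega)
        have e2 : v (m+1+j) = n + 1 := insertW_mid (by omega) (by omega)
        rw [e1, e2]
  rcases Nat.lt_or_ge m (p + k) with hc4 | hc4
  · -- case 4 : m inside the block, both sides false
    constructor
    · intro h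
      rcases mem_apSet.mp h with ⟨_, h2, _⟩
      have e0 : v m = n + 1 := insertW_mid (by omega) (by omega)
      rcases Nat.lt_or_ge (m+1) (p+k) with hc5 | hc5
      · have e1 : v (m+1) = n + 1 := insertW_mid (by omega) (by omega)
        omega
      · have e1 : v (m+1) = u (m + 1 - k) := insertW_ge (by omega)
        have : m + 1 - k = p := by omega
        rw [this] at e1
        have := hu p (by omega)
        omega
    · rintro (⟨hp0, rfl⟩ | ⟨h1, h2⟩ | ⟨i, hi, hpi, rfl⟩)
      · omega
      · omega
      · omega
  · -- case 5 : m ≥ p + k : shifted copy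
    have he : ∀ t ≤ k, v (m + t) = u (m + t - k) := fun t ht => insertW_ge (by omega)
    have e0 : v m = u (m - k) := by
      have := he 0 (by omega); rwa [show m + 0 = m by omega] at this
    have e1 : v (m+1) = u (m - k + 1) := by
      have := he 1 hk; rwa [show m + 1 - k = m - k + 1 by omega] at this
    constructor
    · intro h
      rcases mem_apSet.mp h with ⟨_, h2, h3⟩
      refine Or.inr (Or.inr ⟨m - k, mem_apSet.mpr ⟨by omega, ?_, ?_⟩, by omega, by omega⟩)
      · rw [← e0, ← e1]; exact h2
      · intro j hj
        have := h3 j hj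
        rw [e1, show m + 1 + j = m + (1 + j) by omega, he (1+j) (by omega),
          show m + (1 + j) - k = m - k + 1 + j by omega] at this
        exact this
    · rintro (⟨hp0, rfl⟩ | ⟨h1, h2⟩ | ⟨i, hi, hpi, hm⟩)
      · omega
      · omega
      · have him : i = m - k := by omega
        subst him
        rcases mem_apSet.mp hi with ⟨hl, h2, h3⟩
        refine mem_apSet.mpr ⟨by omega, ?_, ?_⟩
        · rw [e0, e1]; exact h2
        · intro j hj
          rw [e1, show m + 1 + j = m + (1 + j) by omega, he (1+j) (by omega),
            show m + (1 + j) - k = m - k + 1 + j by omega]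
          exact h3 j hj


/-- Number of old ascent-plateaux destroyed by inserting at `p`. -/
def dcard (k L p : ℕ) (u : ℕ → ℕ) : ℕ :=
  ((apSet k L u).filter (fun i => i < p ∧ p ≤ i + k)).card

lemma dcard_le_one {k L p : ℕ} (u : ℕ → ℕ) : dcard k L p u ≤ 1 := by
  apply Finset.card_le_one.mpr
  intro a ha b hb
  rcases Finset.mem_filter.mp ha with ⟨ha1, ha2⟩
  rcases Finset.mem_filter.mp hb with ⟨hb1, hb2⟩
  rcases lt_trichotomy a b with h | h | h
  · have := apSet_spacing ha1 hb1 h; omega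
  · exact h
  · have := apSet_spacing hb1 ha1 h; omega

lemma apWord_insertW {k L n p : ℕ} (hk : 1 ≤ k) (hp : p ≤ L) {u : ℕ → ℕ}
    (hu : ∀ i < L, u i ≤ n) :
    apWord k (L + k) (insertW p k (n+1) u) =
      (if p = 0 then 0 else 1) + (apWord k L u - dcard k L p u) := by
  classical
  set S := apSet k L u with hS
  set good := S.filter (fun i => i + k < p ∨ p ≤ i) with hgood
  have hbad : dcard k L p u = (S.filter (fun i => ¬(i + k < p ∨ p ≤ i))).card := by
    unfold dcard
    congr 1
    apply Finset.filter_congr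
    intro i _
    constructor
    · intro ⟨h1, h2⟩; push_neg; omega
    · intro h; push_neg at h; omega
  have hsplit : good.card + dcard k L p u = S.card := by
    rw [hbad, hgood]
    exact Finset.card_filter_add_card_filter_not (fun i => i + k < p ∨ p ≤ i)
  have hnew : apSet k (L + k) (insertW p k (n+1) u) =
      (if p = 0 then (∅ : Finset ℕ) else {p-1}) ∪
        good.image (fun i => if i + k < p then i else i + k) := by
    ext m
    rw [mem_apSet_insertW hk hp hu]
    rw [Finset.mem_union, Finset.mem_image]
    constructor
    · rintro (⟨hp0, rfl⟩ | ⟨h1, h2⟩ | ⟨i, hi, hpi, rfl⟩)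
      · left; rw [if_neg hp0]; exact Finset.mem_singleton_self _
      · right
        exact ⟨m, Finset.mem_filter.mpr ⟨h1, Or.inl h2⟩, if_pos h2⟩
      · right
        exact ⟨i, Finset.mem_filter.mpr ⟨hi, Or.inr hpi⟩, if_neg (by omega)⟩
    · rintro (h | ⟨i, hi, hφ⟩)
      · by_cases hp0 : p = 0
        · rw [if_pos hp0] at h; exact absurd h (Finset.notMem_empty _)
        · rw [if_neg hp0] at h
          exact Or.inl ⟨hp0, Finset.mem_singleton.mp h⟩
      · rcases Finset.mem_filter.mp hi with ⟨hiS, hor | hor⟩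
        · rw [if_pos hor] at hφ; subst hφ
          exact Or.inr (Or.inl ⟨hiS, hor⟩)
        · rw [if_neg (by omega)] at hφ
          exact Or.inr (Or.inr ⟨i, hiS, hor, hφ.symm⟩)
  rw [apWord_eq_card, apWord_eq_card, hnew]
  rw [Finset.card_union_of_disjoint, Finset.card_image_of_injOn]
  · congr 1
    · split_ifs <;> simp
    · rw [hS] at hsplit; omega
  · -- injOn
    intro a ha b hb hab
    rcases Finset.mem_filter.mp ha with ⟨_, ha2⟩
    rcases Finset.mem_filter.mp hb with ⟨_, hb2⟩
    dsimp only at hab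
    rcases ha2 with h1 | h1 <;> rcases hb2 with h2 | h2
    · rw [if_pos h1, if_pos h2] at hab; omega
    · rw [if_pos h1, if_neg (by omega : ¬ b + k < p)] at hab; omega
    · rw [if_neg (by omega : ¬ a + k < p), if_pos h2] at hab; omega
    · rw [if_neg (by omega : ¬ a + k < p), if_neg (by omega : ¬ b + k < p)] at hab; omega
  · -- disjoint
    rw [Finset.disjoint_left]
    intro a ha hb
    by_cases hp0 : p = 0
    · rw [if_pos hp0] at ha; exact absurd ha (Finset.notMem_empty _)
    · rw [if_neg hp0] at ha
      have haa : a = p - 1 := Finset.mem_singleton.mp ha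
      rcases Finset.mem_image.mp hb with ⟨i, hi, hφ⟩
      rcases Finset.mem_filter.mp hi with ⟨_, h1 | h1⟩
      · rw [if_pos h1] at hφ; omega
      · rw [if_neg (by omega)] at hφ; omega

/-- The "bad" insertion positions: `0` together with the `k` positions cutting each
old ascent-plateau. -/
def badSet (k L : ℕ) (u : ℕ → ℕ) : Finset ℕ :=
  insert 0 ((apSet k L u).biUnion (fun i => Finset.Ioc i (i + k)))

lemma badSet_subset {k L n : ℕ} (hk : 1 ≤ k) {u : ℕ → ℕ} :
    badSet k L u ⊆ Finset.range (L + 1) := by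
  intro p hp
  rcases Finset.mem_insert.mp hp with rfl | hp
  · simp
  · rcases Finset.mem_biUnion.mp hp with ⟨i, hi, hioc⟩
    have := (mem_apSet.mp hi).1
    rw [Finset.mem_Ioc] at hioc
    rw [Finset.mem_range]; omega

lemma badSet_card {k L : ℕ} (hk : 1 ≤ k) {u : ℕ → ℕ} :
    (badSet k L u).card = 1 + k * apWord k L u := by
  unfold badSet
  rw [Finset.card_insert_of_notMem, Finset.card_biUnion]
  · rw [apWord_eq_card]
    have : ∀ i ∈ apSet k L u, (Finset.Ioc i (i + k)).card = k := by
      intro i _; rw [Nat.card_Ioc]; omega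
    rw [Finset.sum_congr rfl this, Finset.sum_const, smul_eq_mul, mul_comm]
    omega
  · intro a ha b hb hab
    rcases lt_trichotomy a b with h | h | h
    · have := apSet_spacing ha hb h
      apply Finset.disjoint_left.mpr
      intro t ht ht'
      rw [Finset.mem_Ioc] at ht ht'; omega
    · exact absurd h hab
    · have := apSet_spacing hb ha h
      apply Finset.disjoint_left.mpr
      intro t ht ht'
      rw [Finset.mem_Ioc] at ht ht'; omega
  · intro h
    rcases Finset.mem_biUnion.mp h with ⟨i, _, hioc⟩
    rw [Finset.mem_Ioc] at hioc; omega

lemma apWord_insertW_of_bad {k L n p : ℕ} (hk : 1 ≤ k) (hp : p ≤ L) {u : ℕ → ℕ}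
    (hu : ∀ i < L, u i ≤ n) (hbad : p ∈ badSet k L u) :
    apWord k (L + k) (insertW p k (n+1) u) = apWord k L u := by
  rw [apWord_insertW hk hp hu]
  rcases Finset.mem_insert.mp hbad with rfl | hb
  · have : dcard k L 0 u = 0 := by
      unfold dcard
      rw [Finset.card_eq_zero, Finset.filter_eq_empty_iff]
      intro i _; omega
    rw [this, if_pos rfl]; omega
  · rcases Finset.mem_biUnion.mp hb with ⟨i, hi, hioc⟩
    rw [Finset.mem_Ioc] at hioc
    have hd1 : 1 ≤ dcard k L p u := by
      apply Finset.card_pos.mpr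
      exact ⟨i, Finset.mem_filter.mpr ⟨hi, by omega⟩⟩
    have hd2 := dcard_le_one (k := k) (L := L) (p := p) u
    have ha1 : 1 ≤ apWord k L u := by
      rw [apWord_eq_card]
      exact Finset.card_pos.mpr ⟨i, hi⟩
    have hp0 : p ≠ 0 := by omega
    rw [if_neg hp0]; omega

lemma apWord_insertW_of_good {k L n p : ℕ} (hk : 1 ≤ k) (hpr : p ∈ Finset.range (L+1))
    {u : ℕ → ℕ} (hu : ∀ i < L, u i ≤ n) (hgood : p ∉ badSet k L u) :
    apWord k (L + k) (insertW p k (n+1) u) = apWord k L u + 1 := by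
  have hp : p ≤ L := by rw [Finset.mem_range] at hpr; omega
  have hp0 : p ≠ 0 := by
    intro h; subst h; exact hgood (Finset.mem_insert_self _ _)
  have hd0 : dcard k L p u = 0 := by
    unfold dcard
    rw [Finset.card_eq_zero, Finset.filter_eq_empty_iff]
    intro i hi ⟨h1, h2⟩
    exact hgood (Finset.mem_insert_of_mem
      (Finset.mem_biUnion.mpr ⟨i, hi, Finset.mem_Ioc.mpr ⟨h1, h2⟩⟩))
  have hdk : k * apWord k L u ≤ L := by
    have h1 := Finset.card_le_card (badSet_subset (n := n) hk (u := u) (L := L))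
    rw [badSet_card hk, Finset.card_range] at h1
    omega
  -- every destroyed-count is 0 and all aps survive: need apWord u ≥ dcard trivially
  rw [apWord_insertW hk hp hu, hd0, if_neg hp0]
  omega

lemma k_mul_apWord_le {k L : ℕ} (hk : 1 ≤ k) (u : ℕ → ℕ) :
    k * apWord k L u ≤ L := by
  have h1 := Finset.card_le_card (badSet_subset (n := 0) hk (u := u) (L := L))
  rw [badSet_card hk, Finset.card_range] at h1
  omega

lemma key_sum {k L n : ℕ} (hk : 1 ≤ k) {u : ℕ → ℕ} (hu : ∀ i < L, u i ≤ n) :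
    (∑ p ∈ Finset.range (L+1), (X : Polynomial ℝ) ^ apWord k (L + k) (insertW p k (n+1) u))
      = (1 + k * apWord k L u) • (X : Polynomial ℝ) ^ apWord k L u
        + (L - k * apWord k L u) • (X : Polynomial ℝ) ^ (apWord k L u + 1) := by
  classical
  rw [← Finset.sum_sdiff (badSet_subset (n := n) hk (u := u) (L := L))]
  have h1 : ∀ p ∈ badSet k L u,
      (X : Polynomial ℝ) ^ apWord k (L + k) (insertW p k (n+1) u)
        = (X : Polynomial ℝ) ^ apWord k L u := by
    intro p hp
    have hple : p ≤ L := by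
      have := badSet_subset (n := n) hk (u := u) (L := L) hp
      rw [Finset.mem_range] at this; omega
    rw [apWord_insertW_of_bad hk hple hu hp]
  have h2 : ∀ p ∈ Finset.range (L+1) \ badSet k L u,
      (X : Polynomial ℝ) ^ apWord k (L + k) (insertW p k (n+1) u)
        = (X : Polynomial ℝ) ^ (apWord k L u + 1) := by
    intro p hp
    rcases Finset.mem_sdiff.mp hp with ⟨hp1, hp2⟩
    rw [apWord_insertW_of_good hk hp1 hu hp2]
  rw [Finset.sum_congr rfl h1, Finset.sum_congr rfl h2, Finset.sum_const, Finset.sum_const]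
  rw [Finset.card_sdiff_of_subset (badSet_subset (n := n) hk (u := u) (L := L))]
  rw [badSet_card hk, Finset.card_range]
  have := k_mul_apWord_le (L := L) hk u
  rw [add_comm]
  congr 2
  omega


end SPaux

namespace SPaux2
open SPaux

variable {k n : ℕ}

lemma mulsucc : k * (n + 1) = k * n + k := by ring

lemma wordOf_le (w : Fin (k*n) → Fin n) : ∀ i < k * n, wordOf k n w i ≤ n := by
  intro i hi
  rw [wordOf, dif_pos hi]
  exact (w ⟨i, hi⟩).isLt

/-- Insert the block of `k` copies of the maximal letter before position `p`. -/
def insF (k n : ℕ) (p : Fin (k*n+1)) (w : Fin (k*n) → Fin n) :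
    Fin (k*(n+1)) → Fin (n+1) := fun i =>
  if h1 : (i : ℕ) < (p : ℕ) then
    (w ⟨i, by have := p.isLt; omega⟩).castSucc
  else if h2 : (i : ℕ) < (p : ℕ) + k then Fin.last n
  else (w ⟨(i : ℕ) - k, by
    have h3 : (i : ℕ) < k * n + k := lt_of_lt_of_eq i.isLt mulsucc
    have := p.isLt
    omega⟩).castSucc

lemma insF_apply_lt {p : Fin (k*n+1)} {w : Fin (k*n) → Fin n} {j : Fin (k*(n+1))}
    (h : (j : ℕ) < (p : ℕ)) (hj2 : (j : ℕ) < k * n) :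
    insF k n p w j = (w ⟨j, hj2⟩).castSucc := by
  simp only [insF]
  rw [dif_pos h]

lemma insF_apply_mid {p : Fin (k*n+1)} {w : Fin (k*n) → Fin n} {j : Fin (k*(n+1))}
    (h1 : ¬ (j : ℕ) < (p : ℕ)) (h2 : (j : ℕ) < (p : ℕ) + k) :
    insF k n p w j = Fin.last n := by
  simp only [insF]
  rw [dif_neg h1, dif_pos h2]

lemma insF_apply_ge {p : Fin (k*n+1)} {w : Fin (k*n) → Fin n} {j : Fin (k*(n+1))}
    (h1 : ¬ (j : ℕ) < (p : ℕ)) (h2 : ¬ (j : ℕ) < (p : ℕ) + k) (hj2 : (j : ℕ) - k < k * n) :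
    insF k n p w j = (w ⟨(j : ℕ) - k, hj2⟩).castSucc := by
  simp only [insF]
  rw [dif_neg h1, dif_neg h2]

/-- The order-embedding of positions skipping the block. -/
def skipB (k n : ℕ) (p : Fin (k*n+1)) : Fin (k*n) → Fin (k*(n+1)) := fun i =>
  if (i : ℕ) < (p : ℕ) then ⟨i, lt_of_lt_of_eq (by have := i.isLt; omega) mulsucc.symm⟩
  else ⟨(i : ℕ) + k, lt_of_lt_of_eq (by have := i.isLt; omega) mulsucc.symm⟩

lemma skipB_val (p : Fin (k*n+1)) (i : Fin (k*n)) :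
    ((skipB k n p i : Fin (k*(n+1))) : ℕ)
      = if (i : ℕ) < (p : ℕ) then (i : ℕ) else (i : ℕ) + k := by
  rw [skipB]
  split_ifs <;> rfl

lemma skipB_injective (p : Fin (k*n+1)) : Function.Injective (skipB k n p) := by
  intro a b hab
  have := congrArg (fun t : Fin (k*(n+1)) => (t : ℕ)) hab
  simp only [skipB_val] at this
  apply Fin.ext
  split_ifs at this <;> omega

lemma skipB_le_iff (p : Fin (k*n+1)) (a b : Fin (k*n)) :
    skipB k n p a ≤ skipB k n p b ↔ a ≤ b := by
  rw [Fin.le_def, Fin.le_def, skipB_val, skipB_val]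
  split_ifs <;> omega

lemma insF_skipB (p : Fin (k*n+1)) (w : Fin (k*n) → Fin n) (i : Fin (k*n)) :
    insF k n p w (skipB k n p i) = (w i).castSucc := by
  have hv := skipB_val p i
  by_cases h : (i : ℕ) < (p : ℕ)
  · rw [if_pos h] at hv
    rw [insF_apply_lt (by omega) (by rw [hv]; exact i.isLt)]
    refine congrArg Fin.castSucc (congrArg w (Fin.ext ?_))
    exact hv
  · rw [if_neg h] at hv
    rw [insF_apply_ge (by omega) (by omega) (by rw [hv]; have := i.isLt; omega)]
    refine congrArg Fin.castSucc (congrArg w (Fin.ext ?_))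
    show ((skipB k n p i : Fin (k*(n+1))) : ℕ) - k = (i : ℕ)
    omega

lemma insF_last_iff (p : Fin (k*n+1)) (w : Fin (k*n) → Fin n) (j : Fin (k*(n+1))) :
    insF k n p w j = Fin.last n ↔ ((p : ℕ) ≤ (j : ℕ) ∧ (j : ℕ) < (p : ℕ) + k) := by
  by_cases h1 : (j : ℕ) < (p : ℕ)
  · rw [insF_apply_lt h1 (by have := p.isLt; omega)]
    exact iff_of_false (Fin.castSucc_lt_last _).ne (by omega)
  · by_cases h2 : (j : ℕ) < (p : ℕ) + k
    · rw [insF_apply_mid h1 h2]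
      exact iff_of_true rfl (by omega)
    · rw [insF_apply_ge h1 h2
        (by have := lt_of_lt_of_eq j.isLt mulsucc; have := p.isLt; omega)]
      exact iff_of_false (Fin.castSucc_lt_last _).ne (by omega)

lemma exists_skipB (p : Fin (k*n+1)) (j : Fin (k*(n+1)))
    (hj : (j : ℕ) < (p : ℕ) ∨ (p : ℕ) + k ≤ (j : ℕ)) : ∃ i, skipB k n p i = j := by
  rcases hj with hj | hj
  · refine ⟨⟨(j : ℕ), by have := p.isLt; omega⟩, ?_⟩
    apply Fin.ext
    rw [skipB_val]
    simp [hj]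
  · refine ⟨⟨(j : ℕ) - k, by have := lt_of_lt_of_eq j.isLt mulsucc; omega⟩, ?_⟩
    apply Fin.ext
    rw [skipB_val]
    have hp : ¬ ((j : ℕ) - k < (p : ℕ)) := by omega
    rw [if_neg hp]
    show (j : ℕ) - k + k = (j : ℕ)
    omega

/-- counting: `insF` has the same number of occurrences of `m.castSucc` as `w` has of
`m`. -/
lemma insF_count (p : Fin (k*n+1)) (w : Fin (k*n) → Fin n) (m : Fin n) :
    (Finset.univ.filter fun j => insF k n p w j = m.castSucc).card
      = (Finset.univ.filter fun i => w i = m).card := by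
  classical
  have himg : (Finset.univ.filter fun j => insF k n p w j = m.castSucc)
      = (Finset.univ.filter fun i => w i = m).image (skipB k n p) := by
    ext j
    simp only [Finset.mem_filter, Finset.mem_image, Finset.mem_univ, true_and]
    constructor
    · intro hj
      have hnb : (j : ℕ) < (p : ℕ) ∨ (p : ℕ) + k ≤ (j : ℕ) := by
        by_contra hc
        push_neg at hc
        have : insF k n p w j = Fin.last n := (insF_last_iff p w j).mpr (by omega)
        rw [this] at hj
        exact absurd hj.symm (Fin.castSucc_lt_last _).ne
      obtain ⟨i, rfl⟩ := exists_skipB p j hnb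
      rw [insF_skipB] at hj
      exact ⟨i, Fin.castSucc_injective _ hj, rfl⟩
    · rintro ⟨i, hi, rfl⟩
      rw [insF_skipB, hi]
  rw [himg, Finset.card_image_of_injective _ (skipB_injective p)]

lemma insF_count_last (hk : 1 ≤ k) (p : Fin (k*n+1)) (w : Fin (k*n) → Fin n) :
    (Finset.univ.filter fun j => insF k n p w j = Fin.last n).card = k := by
  classical
  have h := Finset.card_bij' (s := Finset.univ.filter fun j => insF k n p w j = Fin.last n)
    (t := Finset.range k)
    (i := fun (j : Fin (k*(n+1))) _ => (j : ℕ) - (p : ℕ))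
    (j := fun (t : ℕ) (ht : t ∈ Finset.range k) =>
      (⟨(p : ℕ) + t, by
        have := p.isLt
        rw [Finset.mem_range] at ht
        exact lt_of_lt_of_eq (by omega) mulsucc.symm⟩ : Fin (k*(n+1))))
    (by
      intro j hj
      rw [Finset.mem_filter, insF_last_iff] at hj
      rw [Finset.mem_range]
      show (j : ℕ) - (p : ℕ) < k
      omega)
    (by
      intro t ht
      rw [Finset.mem_range] at ht
      rw [Finset.mem_filter]
      refine ⟨Finset.mem_univ _, (insF_last_iff p w _).mpr ⟨?_, ?_⟩⟩
      · show (p : ℕ) ≤ (p : ℕ) + t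
        omega
      · show (p : ℕ) + t < (p : ℕ) + k
        omega)
    (by
      intro j hj
      rw [Finset.mem_filter, insF_last_iff] at hj
      apply Fin.ext
      show (p : ℕ) + ((j : ℕ) - (p : ℕ)) = (j : ℕ)
      omega)
    (by
      intro t ht
      rw [Finset.mem_range] at ht
      show (p : ℕ) + t - (p : ℕ) = t
      omega)
  rw [h, Finset.card_range]

lemma insF_stirling (hk : 1 ≤ k) (p : Fin (k*n+1)) {w : Fin (k*n) → Fin n}
    (hw : IsKStirling k n w) : IsKStirling k (n+1) (insF k n p w) := by
  constructor
  · intro m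
    rcases eq_or_ne m (Fin.last n) with rfl | hm
    · exact insF_count_last hk p w
    · obtain ⟨m', rfl⟩ := Fin.exists_castSucc_eq.mpr hm
      rw [insF_count]
      exact hw.1 m'
  · intro i j l hij hjl he
    by_cases hj : insF k n p w j = Fin.last n
    · rw [hj]; exact Fin.le_last _
    by_cases hi : insF k n p w i = Fin.last n
    · exfalso
      have hl : insF k n p w l = Fin.last n := he ▸ hi
      apply hj
      rw [insF_last_iff] at hi hl ⊢
      rw [Fin.le_def] at hij hjl
      omega
    · have hl : insF k n p w l ≠ Fin.last n := fun h => hi (he.trans h)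
      rw [insF_last_iff] at hi hj
      have hl' : ¬ ((p : ℕ) ≤ (l : ℕ) ∧ (l : ℕ) < (p : ℕ) + k) :=
        fun hc => hl ((insF_last_iff p w l).mpr hc)
      push_neg at hi hj hl'
      obtain ⟨a, rfl⟩ := exists_skipB p i (by omega)
      obtain ⟨b, rfl⟩ := exists_skipB p j (by omega)
      obtain ⟨c, rfl⟩ := exists_skipB p l (by omega)
      rw [insF_skipB, insF_skipB] at he
      rw [insF_skipB, insF_skipB]
      rw [Fin.castSucc_le_castSucc_iff]
      exact hw.2 a b c ((skipB_le_iff p a b).mp hij) ((skipB_le_iff p b c).mp hjl)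
        (Fin.castSucc_injective _ he)


/-- First position of the maximal letter. -/
def pvOf (k n : ℕ) (w' : Fin (k*(n+1)) → Fin (n+1)) : ℕ :=
  sInf {t : ℕ | ∃ h : t < k*(n+1), w' ⟨t, h⟩ = Fin.last n}

lemma block_lemma (hk : 1 ≤ k) {w' : Fin (k*(n+1)) → Fin (n+1)}
    (hw' : IsKStirling k (n+1) w') :
    pvOf k n w' + k ≤ k * (n+1) ∧
      ∀ j : Fin (k*(n+1)), w' j = Fin.last n ↔
        (pvOf k n w' ≤ (j : ℕ) ∧ (j : ℕ) < pvOf k n w' + k) := by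
  classical
  set S := Finset.univ.filter fun j => w' j = Fin.last n with hS
  have hcard : S.card = k := hw'.1 (Fin.last n)
  have hne : S.Nonempty := Finset.card_pos.mp (by omega)
  set p0 := S.min' hne with hp0
  set q0 := S.max' hne with hq0
  have hp0S : p0 ∈ S := S.min'_mem hne
  have hq0S : q0 ∈ S := S.max'_mem hne
  have hp0w : w' p0 = Fin.last n := (Finset.mem_filter.mp hp0S).2
  have hq0w : w' q0 = Fin.last n := (Finset.mem_filter.mp hq0S).2
  have hiff : ∀ j : Fin (k*(n+1)), w' j = Fin.last n ↔ (p0 ≤ j ∧ j ≤ q0) := by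
    intro j
    constructor
    · intro hj
      have hjS : j ∈ S := Finset.mem_filter.mpr ⟨Finset.mem_univ _, hj⟩
      exact ⟨S.min'_le j hjS, S.le_max' j hjS⟩
    · rintro ⟨h1, h2⟩
      have := hw'.2 p0 j q0 h1 h2 (hp0w.trans hq0w.symm)
      rw [hp0w] at this
      exact le_antisymm (Fin.le_last _) this
  -- pvOf equals p0
  have hmem : (p0 : ℕ) ∈ {t : ℕ | ∃ h : t < k*(n+1), w' ⟨t, h⟩ = Fin.last n} :=
    ⟨p0.isLt, by rw [Fin.eta]; exact hp0w⟩
  have hT : pvOf k n w' = (p0 : ℕ) := by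
    apply le_antisymm (Nat.sInf_le hmem)
    obtain ⟨hlt, hw⟩ := Nat.sInf_mem (⟨(p0 : ℕ), hmem⟩ :
      {t : ℕ | ∃ h : t < k*(n+1), w' ⟨t, h⟩ = Fin.last n}.Nonempty)
    have h3 := ((hiff _).mp hw).1
    rw [Fin.le_def] at h3
    exact h3
  -- the block is an interval of length k
  have hSeq : S = Finset.univ.filter fun j : Fin (k*(n+1)) => p0 ≤ j ∧ j ≤ q0 := by
    ext j
    rw [hS, Finset.mem_filter, Finset.mem_filter]
    rw [hiff j]
  have hcard2 : S.card = (q0 : ℕ) + 1 - (p0 : ℕ) := by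
    rw [hSeq]
    have h := Finset.card_bij' (s := Finset.univ.filter fun j : Fin (k*(n+1)) => p0 ≤ j ∧ j ≤ q0)
      (t := Finset.Icc (p0 : ℕ) (q0 : ℕ))
      (i := fun j _ => (j : ℕ))
      (j := fun t (ht : t ∈ Finset.Icc (p0 : ℕ) (q0 : ℕ)) =>
        (⟨t, by rw [Finset.mem_Icc] at ht; have := q0.isLt; omega⟩ : Fin (k*(n+1))))
      (by
        intro j hj
        rw [Finset.mem_filter] at hj
        rw [Finset.mem_Icc]
        exact ⟨hj.2.1, hj.2.2⟩)
      (by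
        intro t ht
        rw [Finset.mem_Icc] at ht
        rw [Finset.mem_filter]
        refine ⟨Finset.mem_univ _, ?_, ?_⟩
        · rw [Fin.le_def]; exact ht.1
        · rw [Fin.le_def]; exact ht.2)
      (by intro j hj; apply Fin.ext; rfl)
      (by intro t ht; rfl)
    rw [h, Nat.card_Icc]
  have hq0v : (q0 : ℕ) = (p0 : ℕ) + k - 1 := by
    have hpq : p0 ≤ q0 := S.min'_le q0 hq0S
    rw [Fin.le_def] at hpq
    omega
  have h1 : pvOf k n w' + k ≤ k * (n+1) := by
    have := q0.isLt
    have hpq : p0 ≤ q0 := S.min'_le q0 hq0S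
    rw [Fin.le_def] at hpq
    omega
  refine ⟨h1, fun j => ?_⟩
  rw [hiff j, Fin.le_def, Fin.le_def, hT]
  omega

lemma delF_aux {pv : ℕ} {w' : Fin (k*(n+1)) → Fin (n+1)}
    (hbl : ∀ j : Fin (k*(n+1)), w' j = Fin.last n ↔ (pv ≤ (j : ℕ) ∧ (j : ℕ) < pv + k))
    (j : Fin (k*(n+1))) (hj : ¬ (pv ≤ (j : ℕ) ∧ (j : ℕ) < pv + k)) :
    ((w' j : Fin (n+1)) : ℕ) < n := by
  have hne : w' j ≠ Fin.last n := fun hc => hj ((hbl j).mp hc)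
  have hlt := (w' j).isLt
  have hnn : ((w' j : Fin (n+1)) : ℕ) ≠ n := fun hc => hne (Fin.ext hc)
  omega

/-- Delete the block of maximal letters. -/
def delF (k n : ℕ) (pv : ℕ) (w' : Fin (k*(n+1)) → Fin (n+1))
    (hpv : pv + k ≤ k * (n+1))
    (hbl : ∀ j : Fin (k*(n+1)), w' j = Fin.last n ↔ (pv ≤ (j : ℕ) ∧ (j : ℕ) < pv + k)) :
    Fin (k*n) → Fin n := fun i =>
  if h : (i : ℕ) < pv then
    ⟨(w' ⟨i, by omega⟩ : Fin (n+1)), delF_aux hbl _ (by show ¬ (pv ≤ (i:ℕ) ∧ _); omega)⟩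
  else
    ⟨(w' ⟨(i : ℕ) + k, by
        have := i.isLt
        have h2 : k * (n+1) = k * n + k := mulsucc
        omega⟩ : Fin (n+1)),
      delF_aux hbl _ (by show ¬ (pv ≤ (i:ℕ) + k ∧ (i:ℕ) + k < pv + k); omega)⟩

lemma insF_delF (hk : 1 ≤ k) {w' : Fin (k*(n+1)) → Fin (n+1)} {pv : ℕ}
    (hpvn : pv ≤ k * n)
    (hpv : pv + k ≤ k * (n+1))
    (hbl : ∀ j : Fin (k*(n+1)), w' j = Fin.last n ↔ (pv ≤ (j : ℕ) ∧ (j : ℕ) < pv + k)) :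
    insF k n ⟨pv, by omega⟩ (delF k n pv w' hpv hbl) = w' := by
  funext j
  by_cases h1 : (j : ℕ) < pv
  · rw [insF_apply_lt (p := ⟨pv, by omega⟩) h1 (by omega)]
    rw [delF, dif_pos h1]
    apply Fin.ext
    rfl
  · by_cases h2 : (j : ℕ) < pv + k
    · rw [insF_apply_mid (p := ⟨pv, by omega⟩) h1 h2]
      exact ((hbl j).mpr ⟨by omega, h2⟩).symm
    · have hjk : (j : ℕ) - k < k * n := by
        have := j.isLt
        have hm : k * (n+1) = k * n + k := mulsucc
        omega
      rw [insF_apply_ge (p := ⟨pv, by omega⟩) h1 h2 hjk]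
      rw [delF, dif_neg (show ¬ ((⟨(j : ℕ) - k, hjk⟩ : Fin (k*n)) : ℕ) < pv by
        show ¬ ((j : ℕ) - k < pv); omega)]
      apply Fin.ext
      show ((w' ⟨(j : ℕ) - k + k, _⟩ : Fin (n+1)) : ℕ) = ((w' j : Fin (n+1)) : ℕ)
      exact congrArg (fun t => ((w' t : Fin (n+1)) : ℕ))
        (Fin.ext (show (j : ℕ) - k + k = (j : ℕ) by omega))

lemma pvOf_insF (hk : 1 ≤ k) (p : Fin (k*n+1)) (w : Fin (k*n) → Fin n) :
    pvOf k n (insF k n p w) = (p : ℕ) := by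
  have hmem : (p : ℕ) ∈ {t : ℕ | ∃ h : t < k*(n+1), insF k n p w ⟨t, h⟩ = Fin.last n} := by
    refine ⟨by have := p.isLt; have h2 : k * (n+1) = k * n + k := mulsucc; omega, ?_⟩
    rw [insF_last_iff]
    show (p : ℕ) ≤ (p : ℕ) ∧ (p : ℕ) < (p : ℕ) + k
    omega
  apply le_antisymm (Nat.sInf_le hmem)
  obtain ⟨hlt, hw⟩ := Nat.sInf_mem (⟨(p : ℕ), hmem⟩ :
    {t : ℕ | ∃ h : t < k*(n+1), insF k n p w ⟨t, h⟩ = Fin.last n}.Nonempty)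
  rw [insF_last_iff] at hw
  exact hw.1

lemma delF_insF (hk : 1 ≤ k) (p : Fin (k*n+1)) (w : Fin (k*n) → Fin n)
    (hpv : (p : ℕ) + k ≤ k * (n+1))
    (hbl : ∀ j : Fin (k*(n+1)), insF k n p w j = Fin.last n ↔
      ((p : ℕ) ≤ (j : ℕ) ∧ (j : ℕ) < (p : ℕ) + k)) :
    delF k n (p : ℕ) (insF k n p w) hpv hbl = w := by
  funext i
  have hm : k * (n+1) = k * n + k := mulsucc
  have hik : (i : ℕ) < k * (n+1) := by have := i.isLt; omega
  have hikk : (i : ℕ) + k < k * (n+1) := by have := i.isLt; omega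
  by_cases h : (i : ℕ) < (p : ℕ)
  · rw [delF, dif_pos h]
    apply Fin.ext
    show ((insF k n p w ⟨(i : ℕ), _⟩ : Fin (n+1)) : ℕ) = ((w i : Fin n) : ℕ)
    rw [insF_apply_lt (show ((⟨(i : ℕ), hik⟩ : Fin (k*(n+1))) : ℕ) < (p : ℕ) from h)
      (show ((⟨(i : ℕ), hik⟩ : Fin (k*(n+1))) : ℕ) < k * n from i.isLt)]
    exact congrArg (fun t => ((w t : Fin n) : ℕ)) (Fin.ext rfl)
  · rw [delF, dif_neg h]
    apply Fin.ext
    show ((insF k n p w ⟨(i : ℕ) + k, _⟩ : Fin (n+1)) : ℕ) = ((w i : Fin n) : ℕ)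
    rw [insF_apply_ge
      (show ¬ ((⟨(i : ℕ) + k, hikk⟩ : Fin (k*(n+1))) : ℕ) < (p : ℕ) by
        show ¬ ((i : ℕ) + k < (p : ℕ)); omega)
      (show ¬ ((⟨(i : ℕ) + k, hikk⟩ : Fin (k*(n+1))) : ℕ) < (p : ℕ) + k by
        show ¬ ((i : ℕ) + k < (p : ℕ) + k); omega)
      (show ((⟨(i : ℕ) + k, hikk⟩ : Fin (k*(n+1))) : ℕ) - k < k * n by
        show (i : ℕ) + k - k < k * n; have := i.isLt; omega)]
    exact congrArg (fun t => ((w t : Fin n) : ℕ))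
      (Fin.ext (show (i : ℕ) + k - k = (i : ℕ) by omega))

lemma delF_stirling (hk : 1 ≤ k) {w' : Fin (k*(n+1)) → Fin (n+1)}
    (hw' : IsKStirling k (n+1) w') {pv : ℕ} (hpvn : pv ≤ k * n)
    (hpv : pv + k ≤ k * (n+1))
    (hbl : ∀ j : Fin (k*(n+1)), w' j = Fin.last n ↔ (pv ≤ (j : ℕ) ∧ (j : ℕ) < pv + k)) :
    IsKStirling k n (delF k n pv w' hpv hbl) := by
  have hp : pv < k * n + 1 := by omega
  have hins := insF_delF hk hpvn hpv hbl
  constructor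
  · intro m
    have hcnt := insF_count (k := k) (n := n) ⟨pv, by omega⟩ (delF k n pv w' hpv hbl) m
    rw [hins] at hcnt
    rw [← hcnt]
    exact hw'.1 m.castSucc
  · intro i j l hij hjl he
    have e : ∀ a : Fin (k*n), w' (skipB k n ⟨pv, hp⟩ a)
        = ((delF k n pv w' hpv hbl) a).castSucc := fun a =>
      (congrFun hins (skipB k n ⟨pv, hp⟩ a)).symm.trans (insF_skipB _ _ a)
    have h2 := hw'.2 _ _ _ ((skipB_le_iff ⟨pv, hp⟩ i j).mpr hij)
      ((skipB_le_iff ⟨pv, hp⟩ j l).mpr hjl)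
      ((e i).trans ((congrArg Fin.castSucc he).trans (e l).symm))
    rw [e i, e j] at h2
    exact Fin.castSucc_le_castSucc_iff.mp h2


lemma delF_congr {pv pv' : ℕ} (h : pv = pv') (w' : Fin (k*(n+1)) → Fin (n+1))
    (h1 : pv + k ≤ k * (n+1))
    (h2 : ∀ j : Fin (k*(n+1)), w' j = Fin.last n ↔ (pv ≤ (j : ℕ) ∧ (j : ℕ) < pv + k))
    (h1' : pv' + k ≤ k * (n+1))
    (h2' : ∀ j : Fin (k*(n+1)), w' j = Fin.last n ↔ (pv' ≤ (j : ℕ) ∧ (j : ℕ) < pv' + k)) :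
    delF k n pv w' h1 h2 = delF k n pv' w' h1' h2' := by
  subst h
  rfl

lemma pvOf_le (hk : 1 ≤ k) {w' : Fin (k*(n+1)) → Fin (n+1)}
    (hw' : IsKStirling k (n+1) w') : pvOf k n w' ≤ k * n := by
  have h1 := (block_lemma hk hw').1
  have hm : k * (n+1) = k * n + k := mulsucc
  omega

/-- The insertion equivalence. -/
def insEquiv (k n : ℕ) (hk : 1 ≤ k) :
    ({w : Fin (k*n) → Fin n // IsKStirling k n w} × Fin (k*n+1)) ≃
      {w : Fin (k*(n+1)) → Fin (n+1) // IsKStirling k (n+1) w} where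
  toFun z := ⟨insF k n z.2 z.1.1, insF_stirling hk z.2 z.1.2⟩
  invFun w' :=
    (⟨delF k n (pvOf k n w'.1) w'.1 (block_lemma hk w'.2).1 (block_lemma hk w'.2).2,
      delF_stirling hk w'.2 (pvOf_le hk w'.2) (block_lemma hk w'.2).1
        (block_lemma hk w'.2).2⟩,
      ⟨pvOf k n w'.1, by have := pvOf_le hk w'.2; omega⟩)
  left_inv := by
    rintro ⟨⟨w, hw⟩, p⟩
    have hpv := pvOf_insF hk p w
    refine Prod.ext (Subtype.ext ?_) (Fin.ext ?_)
    · dsimp only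
      exact (delF_congr hpv _ _ _ _ _).trans
        (delF_insF hk p w (by have := p.isLt; have hm : k * (n+1) = k * n + k := mulsucc; omega)
          (fun j => insF_last_iff p w j))
    · exact hpv
  right_inv := by
    rintro ⟨w', hw'⟩
    apply Subtype.ext
    dsimp only
    exact insF_delF hk (pvOf_le hk hw') (block_lemma hk hw').1 (block_lemma hk hw').2

lemma apStat_insF (hk : 1 ≤ k) (p : Fin (k*n+1)) (w : Fin (k*n) → Fin n) :
    apStat k (n+1) (insF k n p w)
      = apWord k (k*n + k) (insertW (p : ℕ) k (n+1) (wordOf k n w)) := by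
  have hm : k * (n+1) = k * n + k := mulsucc
  have hcongr : apWord k (k*(n+1)) (wordOf k (n+1) (insF k n p w))
      = apWord k (k*(n+1)) (insertW (p : ℕ) k (n+1) (wordOf k n w)) := by
    apply apWord_congr hk
    intro i hi
    rw [wordOf, dif_pos hi]
    by_cases h1 : i < (p : ℕ)
    · rw [insertW_lt h1, insF_apply_lt (j := ⟨i, hi⟩) h1 (by show i < k * n; have := p.isLt; omega)]
      rw [wordOf, dif_pos (show i < k * n by have := p.isLt; omega)]
      rfl
    · by_cases h2 : i < (p : ℕ) + k
      · rw [insertW_mid (by omega) h2, insF_apply_mid (j := ⟨i, hi⟩) h1 h2]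
        rfl
      · rw [insertW_ge (by omega), insF_apply_ge (j := ⟨i, hi⟩) h1 h2 (by show i - k < k * n; omega)]
        rw [wordOf, dif_pos (show i - k < k * n by omega)]
        rfl
  have := (congrArg (fun t => apWord k t (wordOf k (n+1) (insF k n p w))) hm).symm.trans
    (hcongr.trans (congrArg (fun t => apWord k t (insertW (p : ℕ) k (n+1) (wordOf k n w))) hm))
  exact this

lemma apStat_le (hk : 1 ≤ k) (w : Fin (k*n) → Fin n) : k * apStat k n w ≤ k * n :=
  k_mul_apWord_le hk (wordOf k n w)

lemma per_elem (k n d : ℕ) (hd : k * d ≤ k * n) :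
    (1 + k * d) • (X : Polynomial ℝ) ^ d + (k * n - k * d) • (X : Polynomial ℝ) ^ (d+1)
      = X ^ d + ((k * n : ℕ) : Polynomial ℝ) * X * X ^ d
        + ((k : ℕ) : Polynomial ℝ) * X * (1 - X) * derivative ((X : Polynomial ℝ) ^ d) := by
  rw [nsmul_eq_mul, nsmul_eq_mul, Nat.cast_sub hd, Polynomial.derivative_X_pow]
  cases d with
  | zero => push_cast; simp
  | succ e =>
    rw [map_natCast (Polynomial.C : ℝ →+* Polynomial ℝ)]
    push_cast [Nat.succ_sub_one]
    ring

/-- the combinatorial polynomial. -/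
def Bpoly (k n : ℕ) : Polynomial ℝ :=
  ∑ w : {w : Fin (k * n) → Fin n // IsKStirling k n w}, X ^ apStat k n w.1

lemma B_rec (hk : 1 ≤ k) (n : ℕ) :
    Bpoly k (n+1) = Bpoly k n + ((k * n : ℕ) : Polynomial ℝ) * X * Bpoly k n
      + ((k : ℕ) : Polynomial ℝ) * X * (1 - X) * derivative (Bpoly k n) := by
  classical
  have h0 : Bpoly k (n+1)
      = ∑ z : ({w : Fin (k*n) → Fin n // IsKStirling k n w} × Fin (k*n+1)),
          (X : Polynomial ℝ) ^ apStat k (n+1) (insF k n z.2 z.1.1) :=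
    (Equiv.sum_comp (insEquiv k n hk)
      (fun w' => (X : Polynomial ℝ) ^ apStat k (n+1) w'.1)).symm
  rw [h0, Fintype.sum_prod_type]
  have h1 : ∀ w : {w : Fin (k*n) → Fin n // IsKStirling k n w},
      (∑ p : Fin (k*n+1), (X : Polynomial ℝ) ^ apStat k (n+1) (insF k n p w.1))
        = (X : Polynomial ℝ) ^ apStat k n w.1
          + ((k * n : ℕ) : Polynomial ℝ) * X * X ^ apStat k n w.1
          + ((k : ℕ) : Polynomial ℝ) * X * (1 - X)
              * derivative ((X : Polynomial ℝ) ^ apStat k n w.1) := by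
    intro w
    have e1 : ∀ p : Fin (k*n+1), (X : Polynomial ℝ) ^ apStat k (n+1) (insF k n p w.1)
        = (fun t => (X : Polynomial ℝ) ^ apWord k (k*n + k) (insertW t k (n+1) (wordOf k n w.1)))
            (p : ℕ) := by
      intro p
      rw [apStat_insF hk]
    rw [Finset.sum_congr rfl (fun p _ => e1 p)]
    rw [Fin.sum_univ_eq_sum_range
      (fun t => (X : Polynomial ℝ) ^ apWord k (k*n + k) (insertW t k (n+1) (wordOf k n w.1)))
      (k*n+1)]
    rw [key_sum hk (wordOf_le w.1)]
    exact per_elem k n (apStat k n w.1) (apStat_le hk w.1)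
  rw [Finset.sum_congr rfl (fun w _ => h1 w)]
  rw [Finset.sum_add_distrib, Finset.sum_add_distrib, ← Finset.mul_sum, ← Finset.mul_sum]
  rw [← map_sum derivative _ _]
  rfl

lemma Bpoly_zero : Bpoly k 0 = 1 := by
  classical
  have huniq : ∀ w : {w : Fin (k * 0) → Fin 0 // IsKStirling k 0 w},
      (X : Polynomial ℝ) ^ apStat k 0 w.1 = 1 := by
    intro w
    have : apStat k 0 w.1 = 0 := by
      rw [apStat, apWord_eq_card]
      have : apSet k (k*0) (wordOf k 0 w.1) = ∅ := by
        rw [Finset.eq_empty_iff_forall_notMem]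
        intro m hm
        have := (mem_apSet.mp hm).1
        omega
      rw [this, Finset.card_empty]
    rw [this, pow_zero]
  rw [Bpoly, Finset.sum_congr rfl (fun w _ => huniq w), Finset.sum_const]
  -- card of the subtype is 1
  have : Fintype.card {w : Fin (k * 0) → Fin 0 // IsKStirling k 0 w} = 1 := by
    rw [Fintype.card_eq_one_iff]
    refine ⟨⟨fun i => absurd i.isLt (by omega), ?_, ?_⟩, ?_⟩
    · intro m
      exact absurd m.isLt (by omega)
    · intro i
      exact absurd i.isLt (by omega)
    · intro w
      apply Subtype.ext
      funext i
      exact absurd i.isLt (by omega)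
  rw [Finset.card_univ, this, one_smul]

end SPaux2


namespace SPanal
open PowerSeries

abbrev R := Polynomial ℝ

/-- coefficientwise `d/dx` on power series over `ℝ[X]`. -/
def pd (f : PowerSeries R) : PowerSeries R :=
  PowerSeries.mk fun m => Polynomial.derivative (PowerSeries.coeff m f)

lemma coeff_pd (f : PowerSeries R) (m : ℕ) :
    PowerSeries.coeff m (pd f) = Polynomial.derivative (PowerSeries.coeff m f) := by
  rw [pd, PowerSeries.coeff_mk]

lemma pd_add (f g : PowerSeries R) : pd (f + g) = pd f + pd g := by
  ext m
  simp [coeff_pd]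

lemma pd_sub (f g : PowerSeries R) : pd (f - g) = pd f - pd g := by
  ext m
  simp [coeff_pd]

lemma pd_C (p : R) : pd (PowerSeries.C p) = PowerSeries.C (Polynomial.derivative p) := by
  ext m
  rw [coeff_pd]
  cases m with
  | zero => simp
  | succ m => simp

lemma pd_mul (f g : PowerSeries R) : pd (f * g) = pd f * g + f * pd g := by
  refine PowerSeries.ext fun m => ?_
  rw [coeff_pd, map_add, PowerSeries.coeff_mul, PowerSeries.coeff_mul, PowerSeries.coeff_mul]
  rw [map_sum]
  rw [← Finset.sum_add_distrib]
  apply Finset.sum_congr rfl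
  intro q hq
  rw [Polynomial.derivative_mul, coeff_pd, coeff_pd]

lemma pd_pow (f : PowerSeries R) (m : ℕ) :
    pd (f ^ (m + 1)) = (m + 1 : ℕ) • (f ^ m * pd f) := by
  induction m with
  | zero => simp [pow_succ, pd_mul]
  | succ e ih =>
    rw [pow_succ, pd_mul, ih, succ_nsmul (f ^ (e+1) * pd f) (e+1), smul_mul_assoc]
    congr 1
    · congr 1
      ring

lemma dfun_eq (f : PowerSeries R) :
    PowerSeries.derivativeFun f = PowerSeries.derivative R f := rfl

lemma fact_succ_inv (m : ℕ) :
    (((m+1).factorial : ℝ))⁻¹ * ((m+1 : ℕ) : ℝ) = ((m.factorial : ℝ))⁻¹ := by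
  have h1 : ((m.factorial : ℝ)) ≠ 0 := Nat.cast_ne_zero.mpr (Nat.factorial_ne_zero m)
  have h2 : ((m+1 : ℕ) : ℝ) ≠ 0 := Nat.cast_ne_zero.mpr (Nat.succ_ne_zero m)
  rw [Nat.factorial_succ]
  push_cast
  field_simp

lemma helper1 (a : R) (m : ℕ) :
    (((m+1).factorial : ℝ))⁻¹ • a * ((m : R) + 1) = ((m.factorial : ℝ))⁻¹ • a := by
  rw [show ((m : R) + 1) = ((m+1 : ℕ) : R) by push_cast; ring]
  rw [smul_mul_assoc,
    show ((m+1 : ℕ) : R) = Polynomial.C ((m+1 : ℕ) : ℝ) from (map_natCast _ _).symm]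
  rw [mul_comm, ← Polynomial.smul_eq_C_mul, smul_smul, fact_succ_inv]

lemma helper2 (z : R) (m : ℕ) :
    (((m+1).factorial : ℝ))⁻¹ • (((m+1 : ℕ) : R) * z) = ((m.factorial : ℝ))⁻¹ • z := by
  rw [show ((m+1 : ℕ) : R) = Polynomial.C ((m+1 : ℕ) : ℝ) from (map_natCast _ _).symm]
  rw [← Polynomial.smul_eq_C_mul, smul_smul, fact_succ_inv]

theorem rec_of_EGF (k : ℕ) (hk : 1 ≤ k) (A : ℕ → Polynomial ℝ) (hA0 : A 0 = 1)
    (hA : EGFcond k A) (n : ℕ) :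
    A (n+1) = A n + ((k * n : ℕ) : Polynomial ℝ) * Polynomial.X * A n
      + ((k : ℕ) : Polynomial ℝ) * Polynomial.X * (1 - Polynomial.X)
          * Polynomial.derivative (A n) := by
  classical
  set p : R := Polynomial.C (k : ℝ) * (Polynomial.X - 1) with hp
  set F : PowerSeries R := PowerSeries.mk fun n => ((n.factorial : ℝ)⁻¹) • A n with hF
  set E : PowerSeries R := PowerSeries.mk fun n => ((n.factorial : ℝ)⁻¹) • p ^ n with hE
  set c : PowerSeries R := PowerSeries.C Polynomial.X with hc
  set κ : PowerSeries R := ((k : ℕ) : PowerSeries R) with hκ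
  set P : PowerSeries R := F ^ (k - 1) with hP
  have h0 : P * F * (E - c) = 1 - c := by
    have h1 := hA
    rw [EGFcond] at h1
    rw [← hp, ← hE, ← hF, ← hc] at h1
    rw [hP, pow_sub_one_mul (by omega : k ≠ 0), h1, map_sub, map_one, ← hc]
  have hPF : P * F = F ^ k := by
    rw [hP, pow_sub_one_mul (by omega : k ≠ 0)]
  have hF0 : PowerSeries.constantCoeff F = 1 := by
    rw [hF, PowerSeries.constantCoeff_mk, hA0]
    simp
  have hfactne : ∀ m : ℕ, ((m.factorial : ℝ)) ≠ 0 :=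
    fun m => Nat.cast_ne_zero.mpr (Nat.factorial_ne_zero m)
  -- the constant coefficients
  have hE0 : PowerSeries.constantCoeff (E - c) = 1 - Polynomial.X := by
    rw [map_sub, hE, PowerSeries.constantCoeff_mk, hc]
    simp
  have h1X : (1 - Polynomial.X : R) ≠ 0 := by
    intro h
    have := congrArg (fun q : R => Polynomial.coeff q 0) h
    simp at this
  have hκ0 : κ ≠ 0 := by
    intro h
    rw [hκ] at h
    have := congrArg (PowerSeries.constantCoeff) h
    rw [map_natCast, map_zero] at this
    have : (k : ℝ[X]) ≠ 0 := Nat.cast_ne_zero.mpr (by omega)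
    exact this (by assumption)
  have hP0 : P ≠ 0 := by
    intro h
    have := congrArg (PowerSeries.constantCoeff) h
    rw [hP, map_pow, hF0, one_pow, map_zero] at this
    exact one_ne_zero this
  have hEc0 : E - c ≠ 0 := by
    intro h
    rw [h, map_zero] at hE0
    exact h1X hE0.symm
  -- derivative (in z) toolbox
  have dmul : ∀ f g : PowerSeries R, PowerSeries.derivativeFun (f * g)
      = PowerSeries.derivativeFun f * g + f * PowerSeries.derivativeFun g := by
    intro f g
    rw [PowerSeries.derivativeFun_mul, smul_eq_mul, smul_eq_mul]
    ring
  have dsub : ∀ f g : PowerSeries R, PowerSeries.derivativeFun (f - g)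
      = PowerSeries.derivativeFun f - PowerSeries.derivativeFun g := by
    intro f g
    refine PowerSeries.ext fun m => ?_
    simp only [dfun_eq, map_sub]
  have dpow : ∀ (f : PowerSeries R) (m : ℕ), PowerSeries.derivativeFun (f ^ (m+1))
      = (m+1 : ℕ) • (f ^ m * PowerSeries.derivativeFun f) := by
    intro f m
    induction m with
    | zero => simp [pow_succ, dmul]
    | succ e ih =>
      rw [pow_succ, dmul, ih, succ_nsmul (f ^ (e+1) * PowerSeries.derivativeFun f) (e+1),
        smul_mul_assoc]
      congr 1
      · simp only [nsmul_eq_mul]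
        ring
  -- derivative in z of E
  have hDE : PowerSeries.derivativeFun E = PowerSeries.C p * E := by
    refine PowerSeries.ext fun m => ?_
    rw [dfun_eq, PowerSeries.coeff_derivativeFun, PowerSeries.coeff_C_mul, hE, PowerSeries.coeff_mk,
      PowerSeries.coeff_mk, helper1, mul_smul_comm, ← pow_succ']
  -- coefficients of the derivative of F
  have hDFc : ∀ m : ℕ, PowerSeries.coeff m (PowerSeries.derivativeFun F)
      = ((m.factorial : ℝ))⁻¹ • A (m+1) := by
    intro m
    rw [dfun_eq, PowerSeries.coeff_derivativeFun, hF, PowerSeries.coeff_mk, helper1]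
  -- x-derivative facts
  have hdp : Polynomial.derivative p = Polynomial.C ((k : ℕ) : ℝ) := by
    rw [hp]
    simp
  have hpdE : pd E = κ * (PowerSeries.X * E) := by
    rw [hκ, show ((k : ℕ) : PowerSeries R) = PowerSeries.C ((k:ℕ) : R) from
      (map_natCast (PowerSeries.C (R := R)) k).symm]
    refine PowerSeries.ext fun m => ?_
    rw [coeff_pd, PowerSeries.coeff_C_mul, hE, PowerSeries.coeff_mk]
    cases m with
    | zero =>
      rw [PowerSeries.coeff_zero_X_mul]
      simp
    | succ m =>
      rw [PowerSeries.coeff_succ_X_mul, PowerSeries.coeff_mk]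
      rw [Polynomial.derivative_smul, Polynomial.derivative_pow, hdp, Nat.succ_sub_one]
      rw [show Polynomial.C ((m+1 : ℕ) : ℝ) * p ^ m * Polynomial.C ((k:ℕ):ℝ)
        = ((m+1 : ℕ) : R) * (((k:ℕ) : R) * p ^ m) by
          rw [show ((m+1 : ℕ) : R) = Polynomial.C ((m+1 : ℕ) : ℝ) from (map_natCast _ _).symm,
            show ((k : ℕ) : R) = Polynomial.C ((k : ℕ) : ℝ) from (map_natCast _ _).symm]
          ring]
      rw [helper2, mul_smul_comm]
  have hpdc : pd c = 1 := by
    rw [hc, pd_C]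
    simp
  have hpdFc : ∀ m : ℕ, PowerSeries.coeff m (pd F)
      = ((m.factorial : ℝ))⁻¹ • Polynomial.derivative (A m) := by
    intro m
    rw [coeff_pd, hF, PowerSeries.coeff_mk, Polynomial.derivative_smul]
  -- C-form of κ
  have hκC : κ = PowerSeries.C ((k:ℕ) : R) := by
    rw [hκ, map_natCast]
  have hCp : PowerSeries.C p = κ * (c - 1) := by
    rw [hp, map_mul, map_sub, map_one, hκC, hc,
      show (Polynomial.C ((k:ℝ)) : R) = ((k : ℕ) : R) from map_natCast _ _]
  -- differentiate the EGF identity in z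
  have hD0 : κ * (P * PowerSeries.derivativeFun F) * (E - c)
      + F ^ k * (κ * (c - 1) * E) = 0 := by
    have hD := congrArg PowerSeries.derivativeFun (hPF ▸ h0)
    rw [dmul, dsub, dsub, hc, dfun_eq (PowerSeries.C _), PowerSeries.derivativeFun_C, PowerSeries.derivativeFun_one,
      sub_zero, sub_zero, ← hc] at hD
    rw [show F ^ k = F ^ ((k-1)+1) by congr 1; omega, dpow] at hD
    rw [show F ^ ((k-1)+1) = F ^ k by congr 1; omega] at hD
    rw [show ((k-1)+1 : ℕ) • (F ^ (k-1) * PowerSeries.derivativeFun F)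
        = κ * (P * PowerSeries.derivativeFun F) by
      rw [nsmul_eq_mul, ← hP, hκ, show ((k-1)+1 : ℕ) = k from by omega]] at hD
    rw [hDE, hCp] at hD
    linear_combination hD
  have hI : (E - c) * (PowerSeries.derivativeFun F) = (1 - c) * (F * E) := by
    have hfac : (κ * P) * (F * ((c - 1) * E) + (E - c) * (PowerSeries.derivativeFun F)) = 0 := by
      rw [← hPF] at hD0
      linear_combination hD0
    have hz := (mul_eq_zero.mp hfac).resolve_left (mul_ne_zero hκ0 hP0)
    linear_combination hz
  -- differentiate the EGF identity in x
  have h2 : κ * (P * pd F) * (E - c) + P * F * (κ * (PowerSeries.X * E) - 1) = -1 := by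
    have hpd := congrArg pd (hPF ▸ h0)
    rw [pd_mul, pd_sub, pd_sub, hpdE, hpdc] at hpd
    rw [show pd (1 : PowerSeries R) = 0 by
      rw [show (1 : PowerSeries R) = PowerSeries.C (1 : R) from (map_one _).symm, pd_C]
      simp] at hpd
    rw [show F ^ k = F ^ ((k-1)+1) by congr 1; omega, pd_pow] at hpd
    rw [show F ^ ((k-1)+1) = F ^ k by congr 1; omega] at hpd
    rw [show ((k-1)+1 : ℕ) • (F ^ (k-1) * pd F) = κ * (P * pd F) by
      rw [nsmul_eq_mul, ← hP, hκ, show ((k-1)+1 : ℕ) = k from by omega]] at hpd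
    rw [← hPF] at hpd
    linear_combination hpd
  -- the key PDE
  have hbig : (κ * P * (E - c)) *
      ((PowerSeries.derivativeFun F) - F - κ * c * (PowerSeries.X * (PowerSeries.derivativeFun F))
        - κ * (c * (1 - c)) * pd F) = 0 := by
    linear_combination (-(κ*c)) * h0 + (κ*P*(1 - κ*c*PowerSeries.X)) * hI
      + (-(κ*c*(1-c))) * h2
  have hne : (κ * P * (E - c)) ≠ 0 := mul_ne_zero (mul_ne_zero hκ0 hP0) hEc0
  have hT : (PowerSeries.derivativeFun F)
      = F + κ * c * (PowerSeries.X * (PowerSeries.derivativeFun F))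
        + κ * (c * (1 - c)) * pd F := by
    have hz := (mul_eq_zero.mp hbig).resolve_left hne
    linear_combination hz
  -- coefficient extraction
  have hκc : κ * c = PowerSeries.C (((k:ℕ) : R) * Polynomial.X) := by
    rw [hκC, hc, map_mul]
  have hκc2 : κ * (c * (1 - c))
      = PowerSeries.C (((k:ℕ) : R) * (Polynomial.X * (1 - Polynomial.X))) := by
    rw [hκC, hc, map_mul, map_mul, map_sub, map_one]
  rw [hκc, hκc2] at hT
  cases n with
  | zero =>
    have hco := congrArg (PowerSeries.coeff 0) hT
    rw [map_add, map_add, PowerSeries.coeff_C_mul, PowerSeries.coeff_C_mul,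
      PowerSeries.coeff_zero_X_mul, hDFc 0, hpdFc 0, hF, PowerSeries.coeff_mk] at hco
    simp only [Nat.factorial_zero, Nat.cast_one, inv_one, one_smul, mul_zero] at hco
    rw [show ((k * 0 : ℕ) : R) = 0 by push_cast; ring]
    rw [zero_mul, zero_mul, add_zero]
    rw [hco]
    ring
  | succ m =>
    have hco := congrArg (PowerSeries.coeff (m+1)) hT
    rw [map_add, map_add, PowerSeries.coeff_C_mul, PowerSeries.coeff_C_mul,
      PowerSeries.coeff_succ_X_mul, hDFc m, hDFc (m+1), hpdFc (m+1), hF,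
      PowerSeries.coeff_mk] at hco
    rw [mul_smul_comm, mul_smul_comm] at hco
    have hco2 := congrArg (fun q : R => (((m+1).factorial : ℝ)) • q) hco
    simp only [smul_add, smul_smul] at hco2
    have hfs : (((m+1).factorial : ℝ)) * ((m.factorial : ℝ))⁻¹ = ((m+1 : ℕ) : ℝ) := by
      rw [Nat.factorial_succ]
      push_cast
      field_simp
    rw [mul_inv_cancel₀ (hfactne (m+1)), hfs, one_smul, one_smul, one_smul] at hco2
    rw [Polynomial.smul_eq_C_mul,
      show Polynomial.C ((m+1 : ℕ) : ℝ) = ((m+1 : ℕ) : R) from map_natCast _ _] at hco2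
    rw [hco2]
    push_cast
    ring

end SPanal
/-- For every `n, k ≥ 1` the `1/k`-Eulerian polynomial (defined by the EGF
`Σ A_n^{(k)}(x) z^n/n! = ((1-x)/(e^{kz(x-1)}-x))^{1/k}`) satisfies
`A_n^{(k)}(x) = Σ_{π ∈ Q_n(k)} x^{ap(π)}`. -/

theorem one_over_k_Eulerian_ascent_plateau (k : ℕ) (hk : 1 ≤ k)
    (A : ℕ → Polynomial ℝ) (hA0 : A 0 = 1) (hA : EGFcond k A) :
    ∀ n : ℕ, 1 ≤ n →
      A n = ∑ w : {w : Fin (k * n) → Fin n // IsKStirling k n w}, X ^ apStat k n w.1 := by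
  have key : ∀ n : ℕ, A n = SPaux2.Bpoly k n := by
    intro n
    induction n with
    | zero => rw [hA0, SPaux2.Bpoly_zero]
    | succ m ih =>
      rw [SPanal.rec_of_EGF k hk A hA0 hA m, SPaux2.B_rec hk m, ih]
  intro n _
  exact key n

end
end

section
/- The number of k-Stirling permutations of order n equals the number of increasing pruned even k-ary forests on {1,...,n}; moreover there is a bijection ξ between them such that lap(π) = lleaf(ξ(π)), the number of labeled leaves of the image forest. -/
open Polynomial
open scoped Classical

noncomputable section

/-!  Increasing pruned even `k`-ary forests on a linearly ordered label set `α` are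
encoded by parent functions `f : α → Option (α × Fin k)`: `f x = some (y, s)` means the
labeled node `x` is attached to the `s`-th (unlabeled) child of the labeled node `y`,
and `f x = none` means `x` is the root of a component.  The increasing condition says
that labels of the children of each node increase, so the ordered-tree structure is
determined by `f`; components are ordered by their (increasing) root labels.  -/

/-- The labeled node `u` has a labeled grand child (so it is an internal labeled node
carrying its `k` unlabeled children in the pruned tree). -/
def hasChild {α : Type} {k : ℕ} (f : α → Option (α × Fin k)) (u : α) : Prop :=
  ∃ x s, f x = some (u, s)

/-- `f` encodes an increasing pruned even `k`-ary forest: parents carry smaller labels. -/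
def IsForest {α : Type} [LT α] {k : ℕ} (f : α → Option (α × Fin k)) : Prop :=
  ∀ x y s, f x = some (y, s) → y < x

/-- `f` encodes an increasing pruned even `k`-ary tree: a forest with a unique root. -/
def IsTree {α : Type} [LT α] {k : ℕ} (f : α → Option (α × Fin k)) : Prop :=
  IsForest f ∧ ∃! r, f r = none

/-- `lleaf`: the number of labeled leaves. -/
noncomputable def lleafStat {α : Type} [Fintype α] {k : ℕ}
    (f : α → Option (α × Fin k)) : ℕ :=
  (Finset.univ.filter fun u => ¬ hasChild f u).card

/-- `si`: the number of singleton components (roots that are leaves). -/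
noncomputable def siStat {α : Type} [Fintype α] {k : ℕ}
    (f : α → Option (α × Fin k)) : ℕ :=
  (Finset.univ.filter fun u => f u = none ∧ ¬ hasChild f u).card

/-- A non-root labeled node is old if it carries the greatest label among all the
grand children of its grand parent. -/
def oldNode {α : Type} [LinearOrder α] {k : ℕ}
    (f : α → Option (α × Fin k)) (v : α) : Prop :=
  ∃ y s, f v = some (y, s) ∧ ∀ x : α, (∃ t, f x = some (y, t)) → x ≤ v

/-- A non-root labeled node that is not old is young. -/
def youngNode {α : Type} [LinearOrder α] {k : ℕ}
    (f : α → Option (α × Fin k)) (v : α) : Prop :=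
  (∃ y s, f v = some (y, s)) ∧ ¬ oldNode f v

/-- `oleaf`: the number of old labeled leaves. -/
noncomputable def oleafStat {α : Type} [LinearOrder α] [Fintype α] {k : ℕ}
    (f : α → Option (α × Fin k)) : ℕ :=
  (Finset.univ.filter fun v => oldNode f v ∧ ¬ hasChild f v).card

/-- `oint`: the number of old internal labeled nodes. -/
noncomputable def ointStat {α : Type} [LinearOrder α] [Fintype α] {k : ℕ}
    (f : α → Option (α × Fin k)) : ℕ :=
  (Finset.univ.filter fun v => oldNode f v ∧ hasChild f v).card

/-- `F` has no young leaves. -/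
def NoYoungLeaf {α : Type} [LinearOrder α] {k : ℕ}
    (f : α → Option (α × Fin k)) : Prop :=
  ∀ v : α, ¬ (youngNode f v ∧ ¬ hasChild f v)

/-- The generalized Foata–Strehl transformation `Φ_v`.  If `v` is an old internal node
with grand parent `u`, the subtrees hanging from the `k` children of `v` are transferred
(slotwise) to the corresponding children of `u`, turning `v` into a leaf; if `v` is a
young leaf, all subtrees hanging from the children of `u` whose root labels exceed `v`
are transferred (slotwise) to `k` freshly attached children of `v`; otherwise nothing
happens. -/
noncomputable def phi {α : Type} [LinearOrder α] {k : ℕ} (v : α)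
    (f : α → Option (α × Fin k)) : α → Option (α × Fin k) :=
  match f v with
  | none => f
  | some (u, _) =>
    if ∀ x : α, (∃ t, f x = some (u, t)) → x ≤ v then
      -- `v` is old
      if hasChild f v then
        (fun x => match f x with
          | some (w, j) => if w = v then some (u, j) else some (w, j)
          | none => none)
      else f
    else
      -- `v` is young
      if hasChild f v then f
      else
        (fun x => match f x with
          | some (w, j) => if w = u ∧ v < x then some (v, j) else some (w, j)
          | none => none)

/-- `u` is a removable old leaf of the forest `f`: an old leaf that is a grand child of
the root `r` of its component, the only leaf among the grand children of `r`, the first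
`k-1` children of `r` are leaves, and the label of `u` is smaller than the label of
every later root. -/
def removableOldLeaf {α : Type} [LinearOrder α] {k : ℕ}
    (f : α → Option (α × Fin k)) (u : α) : Prop :=
  oldNode f u ∧ ¬ hasChild f u ∧
  ∃ (r : α) (s : Fin k), f u = some (r, s) ∧ f r = none ∧
    (∀ x : α, (∃ t, f x = some (r, t)) → x ≠ u → hasChild f x) ∧
    (∀ (x : α) (j : Fin k), (j : ℕ) < k - 1 → f x ≠ some (r, j)) ∧
    (∀ r' : α, f r' = none → r < r' → u < r')

/-- `u` is a removable young leaf of the forest `f`: a young leaf that is a grand child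
of the root `r` of the rightmost component such that after applying `Φ_u` the first
`k-1` children of `r` are leaves. -/
noncomputable def removableYoungLeaf {α : Type} [LinearOrder α] {k : ℕ}
    (f : α → Option (α × Fin k)) (u : α) : Prop :=
  youngNode f u ∧ ¬ hasChild f u ∧
  ∃ (r : α) (s : Fin k), f u = some (r, s) ∧ f r = none ∧
    (∀ r' : α, f r' = none → r' ≤ r) ∧
    (∀ (x : α) (j : Fin k), (j : ℕ) < k - 1 → phi u f x ≠ some (r, j))

/-- The forest lies in the class `\overline{𝓕}_n(k)`: the rightmost tree is a singleton
or the first `k-1` children of its root are leaves. -/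
def inBarClass {α : Type} [LinearOrder α] {k : ℕ}
    (f : α → Option (α × Fin k)) : Prop :=
  ∃ r : α, f r = none ∧ (∀ r' : α, f r' = none → r' ≤ r) ∧
    (¬ hasChild f r ∨
      ∀ (x : α) (j : Fin k), (j : ℕ) < k - 1 → f x ≠ some (r, j))

namespace SFB

def lapSet (k L : ℕ) (v : ℕ → ℕ) : Finset ℕ :=
  (Finset.range L).filter fun i =>
    i + k < L ∧ v i < v (i + 1) ∧ ∀ j < k, v (i + 1 + j) = v (i + 1)

lemma apWord_eq_card (k L : ℕ) (v : ℕ → ℕ) : apWord k L v = (lapSet k L v).card := rfl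

lemma mem_lapSet {k L : ℕ} {v : ℕ → ℕ} {i : ℕ} :
    i ∈ lapSet k L v ↔ i + k < L ∧ v i < v (i + 1) ∧ ∀ j < k, v (i + 1 + j) = v (i + 1) := by
  unfold lapSet
  rw [Finset.mem_filter, Finset.mem_range]
  constructor
  · rintro ⟨-, h⟩; exact h
  · intro h; exact ⟨by omega, h⟩

lemma lapSet_sep {k L : ℕ} {v : ℕ → ℕ} (hk : 1 ≤ k) {i i' : ℕ}
    (hi : i ∈ lapSet k L v) (hi' : i' ∈ lapSet k L v) (h : i < i') : i + k ≤ i' := by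
  by_contra hcon
  push_neg at hcon
  obtain ⟨-, -, hplat⟩ := mem_lapSet.mp hi
  obtain ⟨-, hasc', -⟩ := mem_lapSet.mp hi'
  have h1 := hplat (i' - i - 1) (by omega)
  have h2 := hplat (i' - i) (by omega)
  have e1 : i + 1 + (i' - i - 1) = i' := by omega
  have e2 : i + 1 + (i' - i) = i' + 1 := by omega
  rw [e1] at h1; rw [e2] at h2
  omega

/-- insertion of a block of `k` letters `M` right after position `p` of the word. -/
def insW (k : ℕ) (v : ℕ → ℕ) (p M : ℕ) : ℕ → ℕ :=
  fun j => if j ≤ p then v j else if j ≤ p + k then M else v (j - k)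

lemma lapSet_insW (k L p M : ℕ) (v : ℕ → ℕ) (hk : 1 ≤ k) (hp : p < L)
    (hvM : ∀ x, v x < M) :
    lapSet k (L + k) (insW k v p M) =
      insert p (((lapSet k L v).filter fun i => ¬ (i ≤ p ∧ p < i + k)).image
        fun i => if i + k ≤ p then i else i + k) := by
  have hins_le : ∀ x, insW k v p M x ≤ M := by
    intro x; unfold insW
    split_ifs <;> first | exact le_of_lt (hvM _) | exact le_rfl
  ext j
  rw [mem_lapSet, Finset.mem_insert, Finset.mem_image]
  constructor
  · rintro ⟨hjL, hasc, hplat⟩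
    rcases lt_or_ge p j with hpj | hpj
    · -- j > p
      rcases le_or_gt j (p + k) with hjpk | hjpk
      · -- p < j ≤ p + k : impossible
        exfalso
        have : insW k v p M j = M := by unfold insW; rw [if_neg (by omega), if_pos hjpk]
        have := hins_le (j + 1)
        omega
      · -- j > p + k : comes from lap at j - k
        right
        refine ⟨j - k, Finset.mem_filter.mpr ⟨mem_lapSet.mpr ⟨by omega, ?_, ?_⟩, by omega⟩, ?_⟩
        · have e1 : insW k v p M j = v (j - k) := by
            unfold insW; rw [if_neg (by omega), if_neg (by omega)]
          have e2 : insW k v p M (j + 1) = v (j - k + 1) := by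
            unfold insW; rw [if_neg (by omega), if_neg (by omega)]
            congr 1; omega
          rw [e1, e2] at hasc; exact hasc
        · intro t ht
          have h1 := hplat t ht
          have e1 : insW k v p M (j + 1 + t) = v (j - k + 1 + t) := by
            unfold insW; rw [if_neg (by omega), if_neg (by omega)]
            congr 1; omega
          have e2 : insW k v p M (j + 1) = v (j - k + 1) := by
            unfold insW; rw [if_neg (by omega), if_neg (by omega)]
            congr 1; omega
          rw [e1, e2] at h1; exact h1
        · rw [if_neg (by omega)]; omega
    · -- j ≤ p
      rcases le_or_gt (j + k) p with hjk | hjk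
      · -- window entirely before p : survives in place
        right
        refine ⟨j, Finset.mem_filter.mpr ⟨mem_lapSet.mpr ⟨by omega, ?_, ?_⟩, by omega⟩, ?_⟩
        · have e1 : insW k v p M j = v j := by unfold insW; rw [if_pos (by omega)]
          have e2 : insW k v p M (j + 1) = v (j + 1) := by unfold insW; rw [if_pos (by omega)]
          rw [e1, e2] at hasc; exact hasc
        · intro t ht
          have h1 := hplat t ht
          have e1 : insW k v p M (j + 1 + t) = v (j + 1 + t) := by
            unfold insW; rw [if_pos (by omega)]
          have e2 : insW k v p M (j + 1) = v (j + 1) := by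
            unfold insW; rw [if_pos (by omega)]
          rw [e1, e2] at h1; exact h1
        · rw [if_pos hjk]
      · -- j ≤ p < j + k
        rcases eq_or_lt_of_le hpj with hje | hje
        · left; omega
        · -- j < p : impossible
          exfalso
          have h1 := hplat (k - 1) (by omega)
          have e1 : insW k v p M (j + 1 + (k - 1)) = M := by
            unfold insW; rw [if_neg (by omega), if_pos (by omega)]
          have e2 : insW k v p M (j + 1) = v (j + 1) := by
            unfold insW; rw [if_pos (by omega)]
          rw [e1, e2] at h1
          exact absurd h1 (Nat.ne_of_gt (hvM _))
  · rintro (rfl | ⟨i, hi, rfl⟩)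
    · refine ⟨by omega, ?_, ?_⟩
      · have e1 : insW k v j M j = v j := by unfold insW; rw [if_pos le_rfl]
        have e2 : insW k v j M (j + 1) = M := by
          unfold insW; rw [if_neg (by omega), if_pos (by omega)]
        rw [e1, e2]; exact hvM _
      · intro t ht
        have e1 : insW k v j M (j + 1 + t) = M := by
          unfold insW; rw [if_neg (by omega), if_pos (by omega)]
        have e2 : insW k v j M (j + 1) = M := by
          unfold insW; rw [if_neg (by omega), if_pos (by omega)]
        rw [e1, e2]
    · obtain ⟨hil, hisurv⟩ := Finset.mem_filter.mp hi
      obtain ⟨hiL, hiasc, hiplat⟩ := mem_lapSet.mp hil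
      rcases le_or_gt (i + k) p with hik | hik
      · rw [if_pos hik]
        refine ⟨by omega, ?_, ?_⟩
        · have e1 : insW k v p M i = v i := by unfold insW; rw [if_pos (by omega)]
          have e2 : insW k v p M (i + 1) = v (i + 1) := by unfold insW; rw [if_pos (by omega)]
          rw [e1, e2]; exact hiasc
        · intro t ht
          have e1 : insW k v p M (i + 1 + t) = v (i + 1 + t) := by
            unfold insW; rw [if_pos (by omega)]
          have e2 : insW k v p M (i + 1) = v (i + 1) := by unfold insW; rw [if_pos (by omega)]
          rw [e1, e2]; exact hiplat t ht
      · have hpi : p < i := by omega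
        rw [if_neg (by omega)]
        refine ⟨by omega, ?_, ?_⟩
        · have e1 : insW k v p M (i + k) = v i := by
            unfold insW; rw [if_neg (by omega), if_neg (by omega)]
            congr 1; omega
          have e2 : insW k v p M (i + k + 1) = v (i + 1) := by
            unfold insW; rw [if_neg (by omega), if_neg (by omega)]
            congr 1; omega
          rw [e1, e2]; exact hiasc
        · intro t ht
          have e1 : insW k v p M (i + k + 1 + t) = v (i + 1 + t) := by
            unfold insW; rw [if_neg (by omega), if_neg (by omega)]
            congr 1; omega
          have e2 : insW k v p M (i + k + 1) = v (i + 1) := by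
            unfold insW; rw [if_neg (by omega), if_neg (by omega)]
            congr 1; omega
          rw [e1, e2]; exact hiplat t ht

lemma apWord_insW (k L p M : ℕ) (v : ℕ → ℕ) (hk : 1 ≤ k) (hp : p < L)
    (hvM : ∀ x, v x < M) :
    apWord k (L + k) (insW k v p M) =
      if ∃ i ∈ lapSet k L v, i ≤ p ∧ p < i + k then apWord k L v
      else apWord k L v + 1 := by
  rw [apWord_eq_card, lapSet_insW k L p M v hk hp hvM]
  have hinj : Set.InjOn (fun i => if i + k ≤ p then i else i + k)
      ((lapSet k L v).filter fun i => ¬ (i ≤ p ∧ p < i + k)) := by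
    intro a ha b hb hab
    simp only at hab
    split_ifs at hab <;> omega
  have hnotmem : p ∉ ((lapSet k L v).filter fun i => ¬ (i ≤ p ∧ p < i + k)).image
      (fun i => if i + k ≤ p then i else i + k) := by
    intro hmem
    obtain ⟨i, hi, hie⟩ := Finset.mem_image.mp hmem
    obtain ⟨-, hisurv⟩ := Finset.mem_filter.mp hi
    split_ifs at hie <;> omega
  rw [Finset.card_insert_of_notMem hnotmem, Finset.card_image_of_injOn hinj]
  rw [Finset.filter_not, Finset.card_sdiff_of_subset (Finset.filter_subset _ _)]
  have hdcard : ((lapSet k L v).filter fun i => i ≤ p ∧ p < i + k).card =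
      if ∃ i ∈ lapSet k L v, i ≤ p ∧ p < i + k then 1 else 0 := by
    split_ifs with hex
    · obtain ⟨i0, hi0, hw0⟩ := hex
      rw [Finset.card_eq_one]
      refine ⟨i0, ?_⟩
      ext x
      rw [Finset.mem_filter, Finset.mem_singleton]
      constructor
      · rintro ⟨hx, hxw⟩
        by_contra hne
        rcases lt_or_gt_of_ne hne with h | h
        · have := lapSet_sep hk hx hi0 h; omega
        · have := lapSet_sep hk hi0 hx h; omega
      · rintro rfl; exact ⟨hi0, hw0⟩
    · rw [Finset.card_eq_zero, Finset.filter_eq_empty_iff]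
      intro x hx hxw
      exact hex ⟨x, hx, hxw⟩
  rw [hdcard, apWord_eq_card]
  split_ifs with hex
  · obtain ⟨i0, hi0, -⟩ := hex
    have : 1 ≤ (lapSet k L v).card := Finset.card_pos.mpr ⟨i0, hi0⟩
    omega
  · omega

section Stir

lemma card_filter_equiv {α β : Type*} [Fintype α] [Fintype β] (e : α ≃ β) (Q : β → Prop) :
    (Finset.univ.filter fun i => Q (e i)).card = (Finset.univ.filter Q).card := by
  refine Finset.card_bij (fun i _ => e i) ?_ ?_ ?_
  · intro a ha
    simp only [Finset.mem_filter, Finset.mem_univ, true_and] at ha ⊢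
    exact ha
  · intro a _ b _ h; exact e.injective h
  · intro b hb
    refine ⟨e.symm b, ?_, by simp⟩
    simp only [Finset.mem_filter, Finset.mem_univ, true_and] at hb ⊢
    simpa using hb

lemma card_filter_sum {α β : Type*} [Fintype α] [Fintype β] (Q : α ⊕ β → Prop)
    [DecidablePred Q] [DecidablePred fun a => Q (Sum.inl a)]
    [DecidablePred fun b => Q (Sum.inr b)] :
    (Finset.univ.filter Q).card =
      (Finset.univ.filter fun a => Q (Sum.inl a)).card +
      (Finset.univ.filter fun b => Q (Sum.inr b)).card := by
  rw [← Finset.card_toLeft_add_card_toRight (u := Finset.univ.filter Q)]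
  congr 1
  · apply Finset.card_nbij id <;> intro x <;> simp
  · apply Finset.card_nbij id <;> intro x <;> simp

def regTo (k n : ℕ) (p : Fin (k * n + 1)) (i : Fin (k * (n + 1))) : Fin (k * n) ⊕ Fin k :=
  if h : (i : ℕ) < (p : ℕ) then Sum.inl ⟨i, by have := p.isLt; omega⟩
  else if h2 : (i : ℕ) < (p : ℕ) + k then Sum.inr ⟨(i : ℕ) - p, by omega⟩
  else Sum.inl ⟨(i : ℕ) - k, by have := i.isLt; have hm : k * (n + 1) = k * n + k := Nat.mul_succ k n; omega⟩

def regInv (k n : ℕ) (p : Fin (k * n + 1)) : Fin (k * n) ⊕ Fin k → Fin (k * (n + 1))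
  | Sum.inl j =>
      if h : (j : ℕ) < (p : ℕ) then ⟨j, by have := j.isLt; have hm : k * (n + 1) = k * n + k := Nat.mul_succ k n; omega⟩
      else ⟨(j : ℕ) + k, by have := j.isLt; have hm : k * (n + 1) = k * n + k := Nat.mul_succ k n; omega⟩
  | Sum.inr t => ⟨(p : ℕ) + t, by have := p.isLt; have := t.isLt; have hm : k * (n + 1) = k * n + k := Nat.mul_succ k n; omega⟩

lemma reg_left (k n : ℕ) (p : Fin (k * n + 1)) (i : Fin (k * (n+1))) :
    regInv k n p (regTo k n p i) = i := by
  simp only [regTo]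
  split_ifs with h h2
  · simp only [regInv]
    rw [dif_pos h]
  · simp only [regInv]
    exact Fin.ext (show (p : ℕ) + ((i : ℕ) - (p : ℕ)) = (i : ℕ) by omega)
  · simp only [regInv]
    split_ifs with h'
    · exfalso; omega
    · exact Fin.ext (show (i : ℕ) - k + k = (i : ℕ) by omega)

lemma reg_right (k n : ℕ) (p : Fin (k * n + 1)) (x : Fin (k*n) ⊕ Fin k) :
    regTo k n p (regInv k n p x) = x := by
  rcases x with j | t
  · simp only [regInv]
    split_ifs with h
    · simp only [regTo]
      rw [dif_pos h]
    · simp only [regTo]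
      split_ifs with h1 h2
      · exfalso; omega
      · exfalso; omega
      · exact congrArg Sum.inl (Fin.ext (show (j : ℕ) + k - k = (j : ℕ) by omega))
  · unfold regTo
    rw [dif_neg (show ¬ (((regInv k n p (Sum.inr t)) : ℕ) < (p : ℕ)) from fun h => by
        change (p : ℕ) + (t : ℕ) < (p : ℕ) at h; omega),
      dif_pos (show ((regInv k n p (Sum.inr t)) : ℕ) < (p : ℕ) + k by
        change (p : ℕ) + (t : ℕ) < (p : ℕ) + k; have := t.isLt; omega)]
    exact congrArg Sum.inr (Fin.ext (show (p : ℕ) + (t : ℕ) - (p : ℕ) = (t : ℕ) by omega))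

def regEquiv (k n : ℕ) (p : Fin (k * n + 1)) : Fin (k * (n + 1)) ≃ Fin (k * n) ⊕ Fin k where
  toFun := regTo k n p
  invFun := regInv k n p
  left_inv := reg_left k n p
  right_inv := reg_right k n p

def insElim (k n : ℕ) (w : Fin (k * n) → Fin n) : Fin (k * n) ⊕ Fin k → Fin (n + 1) :=
  Sum.elim (fun j => (w j).castSucc) (fun _ => Fin.last n)

def insFun (k n : ℕ) (w : Fin (k * n) → Fin n) (p : Fin (k * n + 1)) :
    Fin (k * (n + 1)) → Fin (n + 1) :=
  fun i => insElim k n w (regTo k n p i)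

lemma insFun_lo {k n : ℕ} (w : Fin (k * n) → Fin n) (p : Fin (k * n + 1))
    (i : Fin (k * (n + 1))) (h : (i : ℕ) < (p : ℕ)) (h' : (i : ℕ) < k * n) :
    insFun k n w p i = (w ⟨i, h'⟩).castSucc := by
  unfold insFun regTo
  rw [dif_pos h]
  rfl

lemma insFun_mid {k n : ℕ} (w : Fin (k * n) → Fin n) (p : Fin (k * n + 1))
    (i : Fin (k * (n + 1))) (h1 : (p : ℕ) ≤ (i : ℕ)) (h2 : (i : ℕ) < (p : ℕ) + k) :
    insFun k n w p i = Fin.last n := by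
  unfold insFun regTo
  rw [dif_neg (by omega), dif_pos h2]
  rfl

lemma insFun_hi {k n : ℕ} (w : Fin (k * n) → Fin n) (p : Fin (k * n + 1))
    (i : Fin (k * (n + 1))) (h : (p : ℕ) + k ≤ (i : ℕ)) (h' : (i : ℕ) - k < k * n) :
    insFun k n w p i = (w ⟨(i : ℕ) - k, h'⟩).castSucc := by
  unfold insFun regTo
  rw [dif_neg (by omega), dif_neg (by omega)]
  rfl

lemma insFun_eq_last_iff {k n : ℕ} (w : Fin (k * n) → Fin n) (p : Fin (k * n + 1))
    (i : Fin (k * (n + 1))) :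
    insFun k n w p i = Fin.last n ↔ (p : ℕ) ≤ (i : ℕ) ∧ (i : ℕ) < (p : ℕ) + k := by
  constructor
  · intro h
    by_contra hcon
    rcases lt_or_ge (i : ℕ) (p : ℕ) with hlt | hge
    · have hb : (i : ℕ) < k * n := by have := p.isLt; omega
      rw [insFun_lo w p i hlt hb] at h
      exact absurd h (Fin.castSucc_lt_last _).ne
    · have hge2 : (p : ℕ) + k ≤ (i : ℕ) := by omega
      have hb : (i : ℕ) - k < k * n := by have := i.isLt; have hm : k * (n + 1) = k * n + k := Nat.mul_succ k n; omega
      rw [insFun_hi w p i hge2 hb] at h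
      exact absurd h (Fin.castSucc_lt_last _).ne
  · rintro ⟨h1, h2⟩
    exact insFun_mid w p i h1 h2

lemma insFun_count {k n : ℕ} (w : Fin (k * n) → Fin n) (p : Fin (k * n + 1))
    (hw : ∀ m : Fin n, (Finset.univ.filter fun i => w i = m).card = k) :
    ∀ m : Fin (n + 1),
      (Finset.univ.filter fun i => insFun k n w p i = m).card = k := by
  intro m
  have key : ∀ i, insFun k n w p i = insElim k n w (regEquiv k n p i) := fun _ => rfl
  have h1 : (Finset.univ.filter fun i => insFun k n w p i = m).card
      = (Finset.univ.filter fun x => insElim k n w x = m).card := by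
    apply Finset.card_equiv (regEquiv k n p)
    intro i
    simp only [Finset.mem_filter, Finset.mem_univ, true_and]
    rw [key]
  have h2 : (Finset.univ.filter fun x => insElim k n w x = m).card
      = (Finset.univ.filter fun a : Fin (k * n) => insElim k n w (Sum.inl a) = m).card
        + (Finset.univ.filter fun b : Fin k => insElim k n w (Sum.inr b) = m).card :=
    card_filter_sum _
  rw [h1, h2]
  induction m using Fin.lastCases with
  | last =>
      have e1 : (Finset.univ.filter fun a : Fin (k * n) =>
          insElim k n w (Sum.inl a) = Fin.last n) = ∅ := by
        apply Finset.filter_false_of_mem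
        intro a _
        exact (Fin.castSucc_lt_last _).ne
      have e2 : (Finset.univ.filter fun b : Fin k =>
          insElim k n w (Sum.inr b) = Fin.last n) = Finset.univ := by
        apply Finset.filter_true_of_mem
        intro b _
        rfl
      rw [e1, e2]
      simp
  | cast m' =>
      have e1 : (Finset.univ.filter fun a : Fin (k * n) =>
          insElim k n w (Sum.inl a) = m'.castSucc)
          = (Finset.univ.filter fun a => w a = m') := by
        apply Finset.filter_congr
        intro a _
        simp only [insElim, Sum.elim_inl]
        exact ⟨fun h => Fin.castSucc_inj.mp h, fun h => by rw [h]⟩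
      have e2 : (Finset.univ.filter fun b : Fin k =>
          insElim k n w (Sum.inr b) = m'.castSucc) = ∅ := by
        apply Finset.filter_false_of_mem
        intro b _
        exact (Fin.castSucc_lt_last m').ne'
      rw [e1, e2, hw m']
      simp

lemma insFun_stirling {k n : ℕ} (hk : 1 ≤ k) (w : Fin (k * n) → Fin n) (p : Fin (k * n + 1))
    (hw : IsKStirling k n w) : IsKStirling k (n + 1) (insFun k n w p) := by
  constructor
  · exact insFun_count w p hw.1
  · intro i j l hij hjl heq
    have hmul : k * (n + 1) = k * n + k := Nat.mul_succ k n
    have hpb := p.isLt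
    have hib := i.isLt
    have hjb := j.isLt
    have hlb := l.isLt
    by_cases hbl : (p : ℕ) ≤ (i : ℕ) ∧ (i : ℕ) < (p : ℕ) + k
    · -- i in block
      have hi : insFun k n w p i = Fin.last n := (insFun_eq_last_iff w p i).mpr hbl
      have hl : insFun k n w p l = Fin.last n := by rw [← heq]; exact hi
      have hlbl := (insFun_eq_last_iff w p l).mp hl
      have hjbl : (p : ℕ) ≤ (j : ℕ) ∧ (j : ℕ) < (p : ℕ) + k := by
        have h1 : (i : ℕ) ≤ (j : ℕ) := hij
        have h2 : (j : ℕ) ≤ (l : ℕ) := hjl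
        omega
      rw [hi, (insFun_eq_last_iff w p j).mpr hjbl]
    · -- i not in block
      have hine : insFun k n w p i ≠ Fin.last n :=
        fun hc => hbl ((insFun_eq_last_iff w p i).mp hc)
      have hlne : ¬ ((p : ℕ) ≤ (l : ℕ) ∧ (l : ℕ) < (p : ℕ) + k) := by
        intro hc
        exact hine (heq.trans ((insFun_eq_last_iff w p l).mpr hc))
      by_cases hjbl : (p : ℕ) ≤ (j : ℕ) ∧ (j : ℕ) < (p : ℕ) + k
      · rw [(insFun_eq_last_iff w p j).mpr hjbl]
        exact Fin.le_last _
      · -- all outside the block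
        have h1 : (i : ℕ) ≤ (j : ℕ) := hij
        have h2 : (j : ℕ) ≤ (l : ℕ) := hjl
        have key : ∀ x : Fin (k * (n + 1)), ¬ ((p : ℕ) ≤ (x : ℕ) ∧ (x : ℕ) < (p : ℕ) + k) →
            ∃ (x0 : ℕ) (hx0 : x0 < k * n),
              insFun k n w p x = (w ⟨x0, hx0⟩).castSucc ∧
              ((x : ℕ) < (p : ℕ) ∧ x0 = (x : ℕ) ∨
                (p : ℕ) + k ≤ (x : ℕ) ∧ x0 = (x : ℕ) - k) := by
          intro x hx
          have hxb := x.isLt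
          rcases lt_or_ge (x : ℕ) (p : ℕ) with hlt | hge
          · exact ⟨x, by omega, insFun_lo w p x hlt (by omega), Or.inl ⟨hlt, rfl⟩⟩
          · have hge2 : (p : ℕ) + k ≤ (x : ℕ) := by omega
            exact ⟨(x : ℕ) - k, by omega, insFun_hi w p x hge2 (by omega),
              Or.inr ⟨hge2, rfl⟩⟩
        obtain ⟨i0, hi0, hieq, hicase⟩ := key i hbl
        obtain ⟨j0, hj0, hjeq, hjcase⟩ := key j hjbl
        obtain ⟨l0, hl0, hleq, hlcase⟩ := key l hlne
        have hij0 : i0 ≤ j0 := by omega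
        have hjl0 : j0 ≤ l0 := by omega
        rw [hieq, hjeq]
        rw [Fin.castSucc_le_castSucc_iff]
        apply hw.2 ⟨i0, hi0⟩ ⟨j0, hj0⟩ ⟨l0, hl0⟩ hij0 hjl0
        have := heq
        rw [hieq, hleq] at this
        exact Fin.castSucc_inj.mp this

end Stir

section Extract

variable {k n : ℕ}

lemma regInv_inl_val (p : Fin (k * n + 1)) (j : Fin (k * n)) :
    ((regInv k n p (Sum.inl j)) : ℕ) = if (j : ℕ) < (p : ℕ) then (j : ℕ) else (j : ℕ) + k := by
  simp only [regInv]
  split_ifs <;> rfl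

lemma regInv_inr_val (p : Fin (k * n + 1)) (t : Fin k) :
    ((regInv k n p (Sum.inr t)) : ℕ) = (p : ℕ) + (t : ℕ) := rfl

lemma exists_block (hk : 1 ≤ k) (u : Fin (k * (n + 1)) → Fin (n + 1))
    (hu : IsKStirling k (n + 1) u) :
    ∃ p : Fin (k * n + 1), ∀ i : Fin (k * (n + 1)),
      u i = Fin.last n ↔ (p : ℕ) ≤ (i : ℕ) ∧ (i : ℕ) < (p : ℕ) + k := by
  have hcard := hu.1 (Fin.last n)
  set S := Finset.univ.filter fun i => u i = Fin.last n with hS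
  have hne : S.Nonempty := by rw [← Finset.card_pos, hcard]; omega
  set p := S.min' hne with hp
  set q := S.max' hne with hq'
  have hpS : p ∈ S := S.min'_mem hne
  have hqS : q ∈ S := S.max'_mem hne
  have hmem : ∀ i, i ∈ S ↔ u i = Fin.last n := by
    intro i; rw [hS, Finset.mem_filter]; simp
  have hblock : ∀ i : Fin (k * (n + 1)), u i = Fin.last n ↔ p ≤ i ∧ i ≤ q := by
    intro i
    constructor
    · intro h
      have hi : i ∈ S := (hmem i).mpr h
      exact ⟨S.min'_le i hi, S.le_max' i hi⟩
    · rintro ⟨h1, h2⟩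
      have heq : u p = u q := ((hmem p).mp hpS).trans ((hmem q).mp hqS).symm
      have := hu.2 p i q h1 h2 heq
      rw [(hmem p).mp hpS] at this
      exact Fin.last_le_iff.mp this
  have hpq : p ≤ q := S.min'_le q hqS
  have hSI : S = Finset.Icc p q := by
    ext i
    rw [hmem, hblock, Finset.mem_Icc]
  have hqval : (q : ℕ) + 1 = (p : ℕ) + k := by
    rw [hSI] at hcard
    rw [Fin.card_Icc] at hcard
    have : (p : ℕ) ≤ (q : ℕ) := hpq
    omega
  have hqb := q.isLt
  have hmul : k * (n + 1) = k * n + k := Nat.mul_succ k n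
  have hpb : (p : ℕ) < k * n + 1 := by omega
  refine ⟨⟨(p : ℕ), hpb⟩, fun i => ?_⟩
  have hval : ((⟨(p : ℕ), hpb⟩ : Fin (k * n + 1)) : ℕ) = (p : ℕ) := rfl
  rw [hblock i, hval]
  rw [Fin.le_def, Fin.le_def]
  omega

def delFun (k n : ℕ) (u : Fin (k * (n + 1)) → Fin (n + 1)) (p : Fin (k * n + 1))
    (hsm : ∀ i : Fin (k * (n + 1)),
      ¬ ((p : ℕ) ≤ (i : ℕ) ∧ (i : ℕ) < (p : ℕ) + k) → (u i : ℕ) < n) :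
    Fin (k * n) → Fin n :=
  fun j => ⟨(u (regInv k n p (Sum.inl j)) : ℕ), by
    apply hsm
    rw [regInv_inl_val]
    have := j.isLt
    split_ifs <;> omega⟩

lemma delFun_val (u : Fin (k * (n + 1)) → Fin (n + 1)) (p : Fin (k * n + 1))
    (hsm : ∀ i : Fin (k * (n + 1)),
      ¬ ((p : ℕ) ≤ (i : ℕ) ∧ (i : ℕ) < (p : ℕ) + k) → (u i : ℕ) < n)
    (j : Fin (k * n)) :
    (delFun k n u p hsm j : ℕ) = (u (regInv k n p (Sum.inl j)) : ℕ) := rfl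

lemma delFun_stirling (hk : 1 ≤ k) (u : Fin (k * (n + 1)) → Fin (n + 1))
    (hu : IsKStirling k (n + 1) u) (p : Fin (k * n + 1))
    (hbl : ∀ i : Fin (k * (n + 1)),
      u i = Fin.last n ↔ (p : ℕ) ≤ (i : ℕ) ∧ (i : ℕ) < (p : ℕ) + k)
    (hsm : ∀ i : Fin (k * (n + 1)),
      ¬ ((p : ℕ) ≤ (i : ℕ) ∧ (i : ℕ) < (p : ℕ) + k) → (u i : ℕ) < n) :
    IsKStirling k n (delFun k n u p hsm) := by
  constructor
  · intro m
    have h1 : (Finset.univ.filter fun i => u i = m.castSucc).card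
        = (Finset.univ.filter fun x => u (regInv k n p x) = m.castSucc).card := by
      apply Finset.card_equiv (regEquiv k n p)
      intro i
      simp only [Finset.mem_filter, Finset.mem_univ, true_and]
      have : regInv k n p (regEquiv k n p i) = i := reg_left k n p i
      rw [this]
    have h2 : (Finset.univ.filter fun x => u (regInv k n p x) = m.castSucc).card
        = (Finset.univ.filter fun a : Fin (k * n) =>
            u (regInv k n p (Sum.inl a)) = m.castSucc).card
          + (Finset.univ.filter fun b : Fin k =>
            u (regInv k n p (Sum.inr b)) = m.castSucc).card :=
      card_filter_sum _
    have h3 : (Finset.univ.filter fun b : Fin k =>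
        u (regInv k n p (Sum.inr b)) = m.castSucc) = ∅ := by
      apply Finset.filter_false_of_mem
      intro b _
      have hin : u (regInv k n p (Sum.inr b)) = Fin.last n := by
        rw [hbl]
        rw [regInv_inr_val]
        have := b.isLt
        omega
      rw [hin]
      exact (Fin.castSucc_lt_last m).ne'
    have h4 : (Finset.univ.filter fun a : Fin (k * n) =>
        u (regInv k n p (Sum.inl a)) = m.castSucc)
        = (Finset.univ.filter fun a => delFun k n u p hsm a = m) := by
      apply Finset.filter_congr
      intro a _
      rw [Fin.ext_iff, Fin.ext_iff, delFun_val]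
      exact Iff.rfl
    have := hu.1 m.castSucc
    rw [h1, h2, h3, h4] at this
    simpa using this
  · intro i j l hij hjl heq
    have hmon : ∀ a b : Fin (k * n), a ≤ b →
        regInv k n p (Sum.inl a) ≤ regInv k n p (Sum.inl b) := by
      intro a b hab
      rw [Fin.le_def, regInv_inl_val, regInv_inl_val]
      have hab' : (a : ℕ) ≤ (b : ℕ) := hab
      split_ifs <;> omega
    have heq' : u (regInv k n p (Sum.inl i)) = u (regInv k n p (Sum.inl l)) := by
      apply Fin.ext
      rw [← delFun_val u p hsm i, ← delFun_val u p hsm l, heq]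
    have := hu.2 _ _ _ (hmon i j hij) (hmon j l hjl) heq'
    rw [Fin.le_def, delFun_val, delFun_val]
    exact this

lemma insFun_delFun (hk : 1 ≤ k) (u : Fin (k * (n + 1)) → Fin (n + 1))
    (p : Fin (k * n + 1))
    (hbl : ∀ i : Fin (k * (n + 1)),
      u i = Fin.last n ↔ (p : ℕ) ≤ (i : ℕ) ∧ (i : ℕ) < (p : ℕ) + k)
    (hsm : ∀ i : Fin (k * (n + 1)),
      ¬ ((p : ℕ) ≤ (i : ℕ) ∧ (i : ℕ) < (p : ℕ) + k) → (u i : ℕ) < n) :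
    insFun k n (delFun k n u p hsm) p = u := by
  funext i
  have hmul : k * (n + 1) = k * n + k := Nat.mul_succ k n
  have hib := i.isLt
  have hpb := p.isLt
  rcases lt_or_ge (i : ℕ) (p : ℕ) with h | h
  · have hb : (i : ℕ) < k * n := by omega
    rw [insFun_lo _ p i h hb]
    have hreg : regInv k n p (Sum.inl ⟨(i : ℕ), hb⟩) = i := by
      apply Fin.ext
      rw [regInv_inl_val]
      show (if (i : ℕ) < (p : ℕ) then (i : ℕ) else (i : ℕ) + k) = (i : ℕ)
      rw [if_pos h]
    apply Fin.ext
    rw [Fin.coe_castSucc, delFun_val, hreg]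
  · rcases lt_or_ge (i : ℕ) ((p : ℕ) + k) with h2 | h2
    · rw [insFun_mid _ p i h h2]
      exact ((hbl i).mpr ⟨h, h2⟩).symm
    · have hb : (i : ℕ) - k < k * n := by omega
      rw [insFun_hi _ p i h2 hb]
      have hreg : regInv k n p (Sum.inl ⟨(i : ℕ) - k, hb⟩) = i := by
        apply Fin.ext
        rw [regInv_inl_val]
        show (if (i : ℕ) - k < (p : ℕ) then (i : ℕ) - k else (i : ℕ) - k + k) = (i : ℕ)
        rw [if_neg (by omega)]
        omega
      apply Fin.ext
      rw [Fin.coe_castSucc, delFun_val, hreg]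

lemma insFun_inj (hk : 1 ≤ k) (w w' : Fin (k * n) → Fin n)
    (p p' : Fin (k * n + 1)) (h : insFun k n w p = insFun k n w' p') :
    p = p' ∧ w = w' := by
  have hmul : k * (n + 1) = k * n + k := Nat.mul_succ k n
  have hpb := p.isLt
  have hpb' := p'.isLt
  have hpp : (p : ℕ) = (p' : ℕ) := by
    have h1 : insFun k n w p ⟨(p : ℕ), by omega⟩ = Fin.last n :=
      insFun_mid w p ⟨(p : ℕ), by omega⟩ (le_refl _)
        (show (p : ℕ) < (p : ℕ) + k by omega)
    have h2 : insFun k n w' p' ⟨(p' : ℕ), by omega⟩ = Fin.last n :=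
      insFun_mid w' p' ⟨(p' : ℕ), by omega⟩ (le_refl _)
        (show (p' : ℕ) < (p' : ℕ) + k by omega)
    rw [h] at h1
    rw [← h] at h2
    have c1 : (p' : ℕ) ≤ (p : ℕ) ∧ (p : ℕ) < (p' : ℕ) + k :=
      (insFun_eq_last_iff w' p' _).mp h1
    have c2 : (p : ℕ) ≤ (p' : ℕ) ∧ (p' : ℕ) < (p : ℕ) + k :=
      (insFun_eq_last_iff w p _).mp h2
    omega
  have hp : p = p' := Fin.ext hpp
  subst hp
  refine ⟨rfl, ?_⟩
  funext j
  have hjb := j.isLt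
  rcases lt_or_ge (j : ℕ) (p : ℕ) with hj | hj
  · have hb : ((j : ℕ)) < k * (n + 1) := by omega
    have e1 : insFun k n w p ⟨(j : ℕ), hb⟩ = (w j).castSucc :=
      insFun_lo w p ⟨(j : ℕ), hb⟩ hj j.isLt
    have e2 : insFun k n w' p ⟨(j : ℕ), hb⟩ = (w' j).castSucc :=
      insFun_lo w' p ⟨(j : ℕ), hb⟩ hj j.isLt
    rw [h] at e1
    rw [e2] at e1
    exact (Fin.castSucc_inj.mp e1.symm)
  · have hb : ((j : ℕ) + k) < k * (n + 1) := by omega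
    have e1 : insFun k n w p ⟨(j : ℕ) + k, hb⟩ = (w j).castSucc := by
      rw [insFun_hi w p ⟨(j : ℕ) + k, hb⟩ (show (p : ℕ) + k ≤ (j : ℕ) + k by omega)
        (show (j : ℕ) + k - k < k * n by omega)]
      exact congrArg Fin.castSucc (congrArg w (Fin.ext
        (show (j : ℕ) + k - k = (j : ℕ) by omega)))
    have e2 : insFun k n w' p ⟨(j : ℕ) + k, hb⟩ = (w' j).castSucc := by
      rw [insFun_hi w' p ⟨(j : ℕ) + k, hb⟩ (show (p : ℕ) + k ≤ (j : ℕ) + k by omega)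
        (show (j : ℕ) + k - k < k * n by omega)]
      exact congrArg Fin.castSucc (congrArg w' (Fin.ext
        (show (j : ℕ) + k - k = (j : ℕ) by omega)))
    rw [h] at e1
    rw [e2] at e1
    exact (Fin.castSucc_inj.mp e1.symm)

end Extract

section Lap

variable {k n : ℕ}

def ew (k n : ℕ) (w : Fin (k * n) → Fin n) : ℕ → ℕ :=
  fun i => if i = 0 then 0 else wordOf k n w (i - 1)

lemma lapStat_eq (w : Fin (k * n) → Fin n) :
    lapStat k n w = apWord k (k * n + 1) (ew k n w) := rfl

lemma wordOf_lt (w : Fin (k * n) → Fin n) {i : ℕ} (h : i < k * n) :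
    wordOf k n w i = (w ⟨i, h⟩ : ℕ) + 1 := dif_pos h

lemma wordOf_ge (w : Fin (k * n) → Fin n) {i : ℕ} (h : ¬ i < k * n) :
    wordOf k n w i = 0 := dif_neg h

lemma ew_lt (w : Fin (k * n) → Fin n) : ∀ x, ew k n w x < n + 1 := by
  intro x
  unfold ew
  split_ifs with h
  · omega
  · unfold wordOf
    split_ifs with h2
    · have := (w ⟨x - 1, h2⟩).isLt
      omega
    · omega

lemma ew_insFun (hk : 1 ≤ k) (w : Fin (k * n) → Fin n) (p : Fin (k * n + 1)) :
    ew k (n + 1) (insFun k n w p) = insW k (ew k n w) (p : ℕ) (n + 1) := by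
  funext j
  have hmul : k * (n + 1) = k * n + k := Nat.mul_succ k n
  have hpb := p.isLt
  rcases Nat.eq_zero_or_pos j with rfl | hj
  · show ew k (n + 1) (insFun k n w p) 0 = insW k (ew k n w) (p : ℕ) (n + 1) 0
    rw [show insW k (ew k n w) (p : ℕ) (n + 1) 0 = ew k n w 0 from if_pos (Nat.zero_le _)]
    rfl
  · rcases le_or_gt j (p : ℕ) with h1 | h1
    · -- j ≤ p
      have hb : j - 1 < k * (n + 1) := by omega
      have hb2 : j - 1 < k * n := by omega
      show ew k (n + 1) (insFun k n w p) j = insW k (ew k n w) (p : ℕ) (n + 1) j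
      rw [show insW k (ew k n w) (p : ℕ) (n + 1) j = ew k n w j from if_pos h1]
      unfold ew
      rw [if_neg (by omega), if_neg (by omega)]
      rw [wordOf_lt (insFun k n w p) hb, wordOf_lt w hb2]
      rw [insFun_lo w p ⟨j - 1, hb⟩ (show j - 1 < (p : ℕ) by omega) hb2]
      rfl
    · rcases le_or_gt j ((p : ℕ) + k) with h2 | h2
      · -- p < j ≤ p + k
        have hb : j - 1 < k * (n + 1) := by omega
        show ew k (n + 1) (insFun k n w p) j = insW k (ew k n w) (p : ℕ) (n + 1) j
        rw [show insW k (ew k n w) (p : ℕ) (n + 1) j = n + 1 from by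
          unfold insW; rw [if_neg (by omega), if_pos h2]]
        unfold ew
        rw [if_neg (by omega)]
        rw [wordOf_lt (insFun k n w p) hb]
        rw [insFun_mid w p ⟨j - 1, hb⟩ (show (p : ℕ) ≤ j - 1 by omega)
          (show j - 1 < (p : ℕ) + k by omega)]
        rfl
      · rcases le_or_gt j (k * (n + 1)) with h3 | h3
        · -- p + k < j ≤ k(n+1)
          have hb : j - 1 < k * (n + 1) := by omega
          have hb2 : j - 1 - k < k * n := by omega
          show ew k (n + 1) (insFun k n w p) j = insW k (ew k n w) (p : ℕ) (n + 1) j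
          rw [show insW k (ew k n w) (p : ℕ) (n + 1) j = ew k n w (j - k) from by
            unfold insW; rw [if_neg (by omega), if_neg (by omega)]]
          unfold ew
          rw [if_neg (by omega), if_neg (by omega)]
          rw [wordOf_lt (insFun k n w p) hb, wordOf_lt w (show j - k - 1 < k * n by omega)]
          have e : insFun k n w p ⟨j - 1, hb⟩ = (w ⟨j - k - 1, by omega⟩).castSucc := by
            rw [insFun_hi w p ⟨j - 1, hb⟩ (show (p : ℕ) + k ≤ j - 1 by omega) hb2]
            exact congrArg Fin.castSucc (congrArg w (Fin.ext
              (show j - 1 - k = j - k - 1 by omega)))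
          rw [e, Fin.coe_castSucc]
        · -- j > k(n+1)
          show ew k (n + 1) (insFun k n w p) j = insW k (ew k n w) (p : ℕ) (n + 1) j
          rw [show insW k (ew k n w) (p : ℕ) (n + 1) j = ew k n w (j - k) from by
            unfold insW; rw [if_neg (by omega), if_neg (by omega)]]
          unfold ew
          rw [if_neg (by omega), if_neg (by omega)]
          rw [wordOf_ge (insFun k n w p) (by omega), wordOf_ge w (by omega)]

lemma lap_insFun (hk : 1 ≤ k) (w : Fin (k * n) → Fin n) (p : Fin (k * n + 1)) :
    lapStat k (n + 1) (insFun k n w p) =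
      if ∃ i ∈ lapSet k (k * n + 1) (ew k n w), i ≤ (p : ℕ) ∧ (p : ℕ) < i + k
      then lapStat k n w else lapStat k n w + 1 := by
  rw [lapStat_eq, ew_insFun hk w p]
  rw [show k * (n + 1) + 1 = (k * n + 1) + k from by rw [Nat.mul_succ]; omega]
  rw [apWord_insW k (k * n + 1) (p : ℕ) (n + 1) (ew k n w) hk p.isLt (ew_lt w)]
  rw [lapStat_eq]

def badF (k n : ℕ) (w : Fin (k * n) → Fin n) : Finset (Fin (k * n + 1)) :=
  Finset.univ.filter fun p =>
    ∃ i ∈ lapSet k (k * n + 1) (ew k n w), i ≤ (p : ℕ) ∧ (p : ℕ) < i + k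

lemma mem_badF {w : Fin (k * n) → Fin n} {p : Fin (k * n + 1)} :
    p ∈ badF k n w ↔
      ∃ i ∈ lapSet k (k * n + 1) (ew k n w), i ≤ (p : ℕ) ∧ (p : ℕ) < i + k := by
  simp only [badF, Finset.mem_filter, Finset.mem_univ, true_and]

lemma badF_card (hk : 1 ≤ k) (w : Fin (k * n) → Fin n) :
    (badF k n w).card = k * lapStat k n w := by
  have h1 : (badF k n w).card =
      ((lapSet k (k * n + 1) (ew k n w)).biUnion fun i => Finset.Ico i (i + k)).card := by
    apply Finset.card_nbij (fun p : Fin (k * n + 1) => (p : ℕ))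
    · intro a ha
      rw [Finset.mem_coe, Finset.mem_biUnion]
      obtain ⟨i, hi, hw⟩ := mem_badF.mp (Finset.mem_coe.mp ha)
      exact ⟨i, hi, Finset.mem_Ico.mpr hw⟩
    · intro a _ b _ hab
      exact Fin.ext hab
    · intro q hq
      rw [Finset.coe_biUnion] at hq
      simp only [Set.mem_iUnion] at hq
      obtain ⟨i, hi, hq'⟩ := hq
      simp only [Finset.mem_coe, Finset.mem_Ico] at hq'
      have hiL := mem_lapSet.mp (Finset.mem_coe.mp hi)
      have hqb : q < k * n + 1 := by omega
      refine ⟨⟨q, hqb⟩, ?_, rfl⟩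
      rw [Finset.mem_coe, mem_badF]
      exact ⟨i, Finset.mem_coe.mp hi, hq'.1, hq'.2⟩
  have hdisj : ∀ x ∈ lapSet k (k * n + 1) (ew k n w),
      ∀ y ∈ lapSet k (k * n + 1) (ew k n w), x ≠ y →
      Disjoint (Finset.Ico x (x + k)) (Finset.Ico y (y + k)) := by
    intro x hx y hy hne
    rw [Finset.disjoint_left]
    intro a hax hay
    rw [Finset.mem_Ico] at hax hay
    rcases lt_or_gt_of_ne hne with hlt | hgt
    · have := lapSet_sep hk hx hy hlt; omega
    · have := lapSet_sep hk hy hx hgt; omega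
  rw [h1, Finset.card_biUnion hdisj]
  have hconst : ∀ i ∈ lapSet k (k * n + 1) (ew k n w), (Finset.Ico i (i + k)).card = k := by
    intro i _
    rw [Nat.card_Ico]
    omega
  rw [Finset.sum_congr rfl hconst, Finset.sum_const, smul_eq_mul, lapStat_eq, apWord_eq_card,
    mul_comm]

end Lap

section Forest

variable {k n : ℕ}

def extF (k n : ℕ) (g : Fin n → Option (Fin n × Fin k)) (c : Option (Fin n × Fin k)) :
    Fin (n + 1) → Option (Fin (n + 1) × Fin k) :=
  fun x => if h : (x : ℕ) < n then (g ⟨x, h⟩).map (Prod.map Fin.castSucc id)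
    else c.map (Prod.map Fin.castSucc id)

def resF (k n : ℕ) (f : Fin (n + 1) → Option (Fin (n + 1) × Fin k)) :
    Fin n → Option (Fin n × Fin k) :=
  fun x => (f x.castSucc).bind fun q =>
    if h : (q.1 : ℕ) < n then some (⟨q.1, h⟩, q.2) else none

def topF (k n : ℕ) (f : Fin (n + 1) → Option (Fin (n + 1) × Fin k)) :
    Option (Fin n × Fin k) :=
  (f (Fin.last n)).bind fun q =>
    if h : (q.1 : ℕ) < n then some (⟨q.1, h⟩, q.2) else none

lemma forest_extF {g : Fin n → Option (Fin n × Fin k)} {c : Option (Fin n × Fin k)}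
    (hg : IsForest g) : IsForest (extF k n g c) := by
  intro x y s hx
  unfold extF at hx
  split_ifs at hx with h
  · obtain ⟨⟨y0, s0⟩, hg0, heq⟩ := Option.map_eq_some_iff.mp hx
    have hy : y = y0.castSucc := by
      have := congrArg Prod.fst heq
      exact this.symm
    have := hg _ _ _ hg0
    rw [Fin.lt_def] at this ⊢
    rw [hy]
    simpa using this
  · obtain ⟨⟨y0, s0⟩, hg0, heq⟩ := Option.map_eq_some_iff.mp hx
    have hy : y = y0.castSucc := by
      have := congrArg Prod.fst heq
      exact this.symm
    rw [Fin.lt_def, hy]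
    have hx' : (x : ℕ) = n := by have := x.isLt; omega
    have := y0.isLt
    simp only [Fin.coe_castSucc]
    omega

lemma resF_extF (g : Fin n → Option (Fin n × Fin k)) (c : Option (Fin n × Fin k)) :
    resF k n (extF k n g c) = g := by
  funext x
  unfold resF extF
  rw [dif_pos (by simpa using x.isLt : ((x.castSucc : Fin (n + 1)) : ℕ) < n)]
  have hmk : (⟨((x.castSucc : Fin (n + 1)) : ℕ), by simpa using x.isLt⟩ : Fin n) = x :=
    Fin.ext (by simp)
  rw [hmk]
  cases hgx : g x with
  | none => rfl
  | some q =>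
      obtain ⟨y0, s0⟩ := q
      simp only [Option.map_some, Option.bind_some, Prod.map, id]
      rw [dif_pos (by simpa using y0.isLt : ((y0.castSucc : Fin (n + 1)) : ℕ) < n)]
      exact congrArg some (Prod.ext (Fin.ext (by simp)) rfl)

lemma topF_extF (g : Fin n → Option (Fin n × Fin k)) (c : Option (Fin n × Fin k)) :
    topF k n (extF k n g c) = c := by
  unfold topF extF
  rw [dif_neg (by simp : ¬ ((Fin.last n : Fin (n + 1)) : ℕ) < n)]
  cases c with
  | none => rfl
  | some q =>
      obtain ⟨y0, s0⟩ := q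
      simp only [Option.map_some, Option.bind_some, Prod.map, id]
      rw [dif_pos (by simpa using y0.isLt : ((y0.castSucc : Fin (n + 1)) : ℕ) < n)]
      exact congrArg some (Prod.ext (Fin.ext (by simp)) rfl)

lemma extF_resF_topF {f : Fin (n + 1) → Option (Fin (n + 1) × Fin k)} (hf : IsForest f) :
    extF k n (resF k n f) (topF k n f) = f := by
  funext x
  unfold extF
  split_ifs with h
  · unfold resF
    have hcs : (⟨(x : ℕ), h⟩ : Fin n).castSucc = x := Fin.ext (by simp)
    rw [hcs]
    cases hfx : f x with
    | none => rfl
    | some q =>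
        obtain ⟨y, s⟩ := q
        have hy : (y : ℕ) < n := by
          have := hf x y s hfx
          rw [Fin.lt_def] at this
          omega
        simp only [Option.bind_some]
        rw [dif_pos hy]
        simp only [Option.map_some, Prod.map, id]
        exact congrArg some (Prod.ext (Fin.ext (by simp)) rfl)
  · have hx : x = Fin.last n := by
      apply Fin.ext
      have := x.isLt
      simp only [Fin.val_last]
      omega
    subst hx
    unfold topF
    cases hfx : f (Fin.last n) with
    | none => rfl
    | some q =>
        obtain ⟨y, s⟩ := q
        have hy : (y : ℕ) < n := by
          have := hf _ y s hfx
          rw [Fin.lt_def] at this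
          simp only [Fin.val_last] at this
          omega
        simp only [Option.bind_some]
        rw [dif_pos hy]
        simp only [Option.map_some, Prod.map, id]
        exact congrArg some (Prod.ext (Fin.ext (by simp)) rfl)

lemma forest_resF {f : Fin (n + 1) → Option (Fin (n + 1) × Fin k)} (hf : IsForest f) :
    IsForest (resF k n f) := by
  intro x y s hx
  unfold resF at hx
  cases hfx : f x.castSucc with
  | none => rw [hfx] at hx; exact absurd hx (by simp)
  | some q =>
      obtain ⟨y0, s0⟩ := q
      rw [hfx] at hx
      simp only [Option.bind_some] at hx
      split_ifs at hx with h
      · have heq : ((⟨(y0 : ℕ), h⟩ : Fin n), s0) = (y, s) := Option.some_inj.mp hx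
        have hy : y = ⟨(y0 : ℕ), h⟩ := (congrArg Prod.fst heq).symm
        have := hf x.castSucc y0 s0 hfx
        rw [Fin.lt_def] at this
        rw [Fin.lt_def, hy]
        simpa using this

end Forest

section Leaf

variable {k n : ℕ}

lemma hasChild_extF_last (g : Fin n → Option (Fin n × Fin k)) (c : Option (Fin n × Fin k)) :
    ¬ hasChild (extF k n g c) (Fin.last n) := by
  rintro ⟨x, s, hx⟩
  unfold extF at hx
  split_ifs at hx with h
  · obtain ⟨⟨y0, s0⟩, -, heq⟩ := Option.map_eq_some_iff.mp hx
    have hfst : y0.castSucc = Fin.last n := congrArg Prod.fst heq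
    exact absurd hfst (Fin.castSucc_lt_last y0).ne
  · obtain ⟨⟨y0, s0⟩, -, heq⟩ := Option.map_eq_some_iff.mp hx
    have hfst : y0.castSucc = Fin.last n := congrArg Prod.fst heq
    exact absurd hfst (Fin.castSucc_lt_last y0).ne

lemma hasChild_extF_castSucc (g : Fin n → Option (Fin n × Fin k))
    (c : Option (Fin n × Fin k)) (u : Fin n) :
    hasChild (extF k n g c) u.castSucc ↔ hasChild g u ∨ ∃ s, c = some (u, s) := by
  constructor
  · rintro ⟨x, s, hx⟩
    unfold extF at hx
    split_ifs at hx with h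
    · obtain ⟨⟨y0, s0⟩, hg0, heq⟩ := Option.map_eq_some_iff.mp hx
      have h1 : y0.castSucc = u.castSucc := congrArg Prod.fst heq
      have h2 : y0 = u := Fin.castSucc_inj.mp h1
      subst h2
      exact Or.inl ⟨⟨x, h⟩, s0, hg0⟩
    · obtain ⟨⟨y0, s0⟩, hg0, heq⟩ := Option.map_eq_some_iff.mp hx
      have h1 : y0.castSucc = u.castSucc := congrArg Prod.fst heq
      have h2 : y0 = u := Fin.castSucc_inj.mp h1
      subst h2
      exact Or.inr ⟨s0, by rw [hg0]⟩
  · rintro (⟨x, s, hx⟩ | ⟨s, hc⟩)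
    · refine ⟨x.castSucc, s, ?_⟩
      unfold extF
      have hlt : ((x.castSucc : Fin (n + 1)) : ℕ) < n := by simpa using x.isLt
      rw [dif_pos hlt]
      have hmk : (⟨((x.castSucc : Fin (n + 1)) : ℕ), hlt⟩ : Fin n) = x := Fin.ext (by simp)
      rw [hmk, hx]
      rfl
    · refine ⟨Fin.last n, s, ?_⟩
      unfold extF
      rw [dif_neg (by simp : ¬ ((Fin.last n : Fin (n + 1)) : ℕ) < n), hc]
      rfl

def badO (k n : ℕ) (g : Fin n → Option (Fin n × Fin k)) :
    Finset (Option (Fin n × Fin k)) :=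
  Finset.univ.filter fun c => ∃ y s, c = some (y, s) ∧ ¬ hasChild g y

lemma mem_badO {g : Fin n → Option (Fin n × Fin k)} {c : Option (Fin n × Fin k)} :
    c ∈ badO k n g ↔ ∃ y s, c = some (y, s) ∧ ¬ hasChild g y := by
  simp only [badO, Finset.mem_filter, Finset.mem_univ, true_and]

lemma lleaf_extF (g : Fin n → Option (Fin n × Fin k)) (c : Option (Fin n × Fin k)) :
    lleafStat (extF k n g c) =
      if c ∈ badO k n g then lleafStat g else lleafStat g + 1 := by
  have hL : lleafStat (extF k n g c)
      = (∑ u : Fin n, if ¬ (hasChild g u ∨ ∃ s, c = some (u, s)) then (1 : ℕ) else 0) + 1 := by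
    unfold lleafStat
    rw [Finset.card_filter, Fin.sum_univ_castSucc]
    congr 1
    · apply Finset.sum_congr rfl
      intro u _
      simp only [hasChild_extF_castSucc]
    · rw [if_pos (hasChild_extF_last g c)]
  have hG : lleafStat g = ∑ u : Fin n, if ¬ hasChild g u then (1 : ℕ) else 0 := by
    unfold lleafStat
    rw [Finset.card_filter]
  cases c with
  | none =>
      have hc : (none : Option (Fin n × Fin k)) ∉ badO k n g := by
        rw [mem_badO]
        rintro ⟨y, s, h, -⟩
        cases h
      rw [if_neg hc, hL, hG]
      congr 1
      apply Finset.sum_congr rfl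
      intro u _
      simp
  | some q =>
      obtain ⟨y0, s0⟩ := q
      have hiff : ∀ u : Fin n,
          (∃ s, (some (y0, s0) : Option (Fin n × Fin k)) = some (u, s)) ↔ u = y0 := by
        intro u
        constructor
        · rintro ⟨s, hs⟩
          have h1 : (y0, s0) = (u, s) := Option.some_inj.mp hs
          exact (congrArg Prod.fst h1).symm
        · rintro rfl
          exact ⟨s0, rfl⟩
      have hsplit : ∀ u : Fin n, (if ¬ hasChild g u then (1 : ℕ) else 0)
          = (if ¬ (hasChild g u ∨ u = y0) then (1 : ℕ) else 0)
            + (if u = y0 then (if ¬ hasChild g y0 then (1 : ℕ) else 0) else 0) := by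
        intro u
        by_cases h1 : u = y0
        · subst h1
          by_cases h2 : hasChild g u <;> simp [h2]
        · by_cases h2 : hasChild g u <;> simp [h1, h2]
      have hGsplit : lleafStat g
          = (∑ u : Fin n, if ¬ (hasChild g u ∨ u = y0) then (1 : ℕ) else 0)
            + (if ¬ hasChild g y0 then (1 : ℕ) else 0) := by
        rw [hG, Finset.sum_congr rfl (fun u _ => hsplit u), Finset.sum_add_distrib,
          Finset.sum_ite_eq' Finset.univ y0]
        simp
      have hLs : lleafStat (extF k n g (some (y0, s0)))
          = (∑ u : Fin n, if ¬ (hasChild g u ∨ u = y0) then (1 : ℕ) else 0) + 1 := by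
        rw [hL]
        congr 1
        apply Finset.sum_congr rfl
        intro u _
        simp only [hiff]
      have hmem : ((some (y0, s0) : Option (Fin n × Fin k)) ∈ badO k n g)
          ↔ ¬ hasChild g y0 := by
        rw [mem_badO]
        constructor
        · rintro ⟨y, s, hys, hnc⟩
          have h1 : (y0, s0) = (y, s) := Option.some_inj.mp hys
          have hy : y0 = y := congrArg Prod.fst h1
          rw [hy]
          exact hnc
        · intro h
          exact ⟨y0, s0, rfl, h⟩
      split_ifs with hb
      · rw [hLs, hGsplit, if_pos (hmem.mp hb)]
      · rw [hLs, hGsplit, if_neg (fun hh => hb (hmem.mpr hh))]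

lemma badO_card (g : Fin n → Option (Fin n × Fin k)) :
    (badO k n g).card = k * lleafStat g := by
  have h1 : badO k n g
      = ((Finset.univ.filter fun y => ¬ hasChild g y) ×ˢ (Finset.univ : Finset (Fin k))).image
          (fun q : Fin n × Fin k => (some q : Option (Fin n × Fin k))) := by
    ext c
    rw [mem_badO, Finset.mem_image]
    constructor
    · rintro ⟨y, s, rfl, hnc⟩
      exact ⟨(y, s), Finset.mem_product.mpr ⟨Finset.mem_filter.mpr ⟨Finset.mem_univ _, hnc⟩,
        Finset.mem_univ _⟩, rfl⟩
    · rintro ⟨⟨y, s⟩, hmem, rfl⟩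
      obtain ⟨hy, -⟩ := Finset.mem_product.mp hmem
      exact ⟨y, s, rfl, (Finset.mem_filter.mp hy).2⟩
  rw [h1, Finset.card_image_of_injective _ (Option.some_injective _), Finset.card_product]
  unfold lleafStat
  rw [Finset.card_univ, Fintype.card_fin]
  ring

end Leaf

section Main

def stirStep {k n : ℕ} (hk : 1 ≤ k) :
    {w : Fin (k * n) → Fin n // IsKStirling k n w} × Fin (k * n + 1) →
      {w : Fin (k * (n + 1)) → Fin (n + 1) // IsKStirling k (n + 1) w} :=
  fun x => ⟨insFun k n x.1.1 x.2, insFun_stirling hk x.1.1 x.2 x.1.2⟩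

lemma stirStep_bij {k n : ℕ} (hk : 1 ≤ k) :
    Function.Bijective (stirStep (k := k) (n := n) hk) := by
  constructor
  · rintro ⟨⟨w, hw⟩, p⟩ ⟨⟨w', hw'⟩, p'⟩ h
    have h2 : insFun k n w p = insFun k n w' p' := congrArg Subtype.val h
    obtain ⟨hp, hww⟩ := insFun_inj hk w w' p p' h2
    exact Prod.ext (Subtype.ext hww) hp
  · rintro ⟨u, hu⟩
    obtain ⟨p, hbl⟩ := exists_block hk u hu
    have hsm : ∀ i : Fin (k * (n + 1)),
        ¬ ((p : ℕ) ≤ (i : ℕ) ∧ (i : ℕ) < (p : ℕ) + k) → (u i : ℕ) < n := by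
      intro i hnb
      have hne : u i ≠ Fin.last n := fun hc => hnb ((hbl i).mp hc)
      have hlt := (u i).isLt
      rcases lt_or_eq_of_le (Nat.lt_succ_iff.mp hlt) with h | h
      · exact h
      · exact absurd (Fin.ext (h.trans (Fin.val_last n).symm)) hne
    exact ⟨(⟨delFun k n u p hsm, delFun_stirling hk u hu p hbl hsm⟩, p),
      Subtype.ext (insFun_delFun hk u p hbl hsm)⟩

noncomputable def stirEquiv {k n : ℕ} (hk : 1 ≤ k) :
    {w : Fin (k * n) → Fin n // IsKStirling k n w} × Fin (k * n + 1) ≃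
      {w : Fin (k * (n + 1)) → Fin (n + 1) // IsKStirling k (n + 1) w} :=
  Equiv.ofBijective _ (stirStep_bij hk)

def forEquiv (k n : ℕ) :
    {f : Fin n → Option (Fin n × Fin k) // IsForest f} × Option (Fin n × Fin k) ≃
      {f : Fin (n + 1) → Option (Fin (n + 1) × Fin k) // IsForest f} where
  toFun x := ⟨extF k n x.1.1 x.2, forest_extF x.1.2⟩
  invFun f := (⟨resF k n f.1, forest_resF f.2⟩, topF k n f.1)
  left_inv := by
    rintro ⟨⟨g, hg⟩, c⟩
    exact Prod.ext (Subtype.ext (resF_extF g c)) (topF_extF g c)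
  right_inv := by
    rintro ⟨f, hf⟩
    exact Subtype.ext (extF_resF_topF hf)

lemma exists_matching_equiv {γ δ : Type} [Fintype γ] [Fintype δ]
    (hcard : Fintype.card γ = Fintype.card δ) (s : Finset γ) (t : Finset δ)
    (h : s.card = t.card) : ∃ σ : γ ≃ δ, ∀ x, x ∈ s ↔ σ x ∈ t := by
  have hcompl : sᶜ.card = tᶜ.card := by
    rw [Finset.card_compl, Finset.card_compl, hcard, h]
  let e1 : {x // x ∈ s} ≃ {y // y ∈ t} := Finset.equivOfCardEq h
  let e2 : {x // ¬ x ∈ s} ≃ {y // ¬ y ∈ t} :=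
    ((Equiv.subtypeEquivRight (fun x => (Finset.mem_compl).symm)).trans
      (Finset.equivOfCardEq hcompl)).trans
      (Equiv.subtypeEquivRight (fun y => Finset.mem_compl))
  refine ⟨((Equiv.sumCompl (· ∈ s)).symm.trans ((e1.sumCongr e2).trans
    (Equiv.sumCompl (· ∈ t)))), fun x => ?_⟩
  by_cases hx : x ∈ s
  · simp only [Equiv.trans_apply, Equiv.sumCompl_symm_apply_of_pos hx,
      Equiv.sumCongr_apply, Sum.map_inl, Equiv.sumCompl_apply_inl]
    exact ⟨fun _ => (e1 ⟨x, hx⟩).2, fun _ => hx⟩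
  · simp only [Equiv.trans_apply, Equiv.sumCompl_symm_apply_of_neg hx,
      Equiv.sumCongr_apply, Sum.map_inr, Equiv.sumCompl_apply_inr]
    exact ⟨fun hc => absurd hc hx, fun hc => absurd hc (e2 ⟨x, hx⟩).2⟩

lemma main_induction (k : ℕ) (hk : 1 ≤ k) : ∀ n : ℕ,
    ∃ e : {w : Fin (k * n) → Fin n // IsKStirling k n w} ≃
        {f : Fin n → Option (Fin n × Fin k) // IsForest f},
      ∀ w, lapStat k n w.1 = lleafStat (e w).1 := by
  intro n
  induction n with
  | zero =>
      have hlap : ∀ w : {w : Fin (k * 0) → Fin 0 // IsKStirling k 0 w},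
          lapStat k 0 w.1 = 0 := by
        intro w
        rw [lapStat_eq, apWord_eq_card]
        rw [Finset.card_eq_zero, Finset.eq_empty_iff_forall_notMem]
        intro i hi
        have h1 := (mem_lapSet.mp hi).1
        have h0 : k * 0 = 0 := Nat.mul_zero k
        omega
      have hleaf : ∀ f : {f : Fin 0 → Option (Fin 0 × Fin k) // IsForest f},
          lleafStat f.1 = 0 := by
        intro f
        unfold lleafStat
        rw [Finset.card_eq_zero, Finset.eq_empty_iff_forall_notMem]
        intro x
        exact fun _ => x.elim0
      exact ⟨{
        toFun := fun _ => ⟨fun x => x.elim0, fun x _ _ _ => x.elim0⟩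
        invFun := fun _ => ⟨fun x => x.elim0, ⟨fun m => m.elim0, fun i _ _ _ _ _ => i.elim0⟩⟩
        left_inv := fun w => Subtype.ext (funext fun x => x.elim0)
        right_inv := fun f => Subtype.ext (funext fun x => x.elim0)
      }, fun w => (hlap w).trans (hleaf _).symm⟩
  | succ n ih =>
      obtain ⟨e, he⟩ := ih
      have hchoice : ∀ w : {w : Fin (k * n) → Fin n // IsKStirling k n w},
          ∃ σ : Fin (k * n + 1) ≃ Option (Fin n × Fin k),
            ∀ p, p ∈ badF k n w.1 ↔ σ p ∈ badO k n (e w).1 := by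
        intro w
        apply exists_matching_equiv
        · rw [Fintype.card_fin, Fintype.card_option, Fintype.card_prod,
            Fintype.card_fin, Fintype.card_fin]
          ring
        · rw [badF_card hk w.1, badO_card (e w).1, he w]
      choose σ hσ using hchoice
      let mid : {w : Fin (k * n) → Fin n // IsKStirling k n w} × Fin (k * n + 1) ≃
          {f : Fin n → Option (Fin n × Fin k) // IsForest f} × Option (Fin n × Fin k) :=
        { toFun := fun x => (e x.1, σ x.1 x.2)
          invFun := fun y => (e.symm y.1, (σ (e.symm y.1)).symm y.2)
          left_inv := by
            rintro ⟨w, p⟩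
            simp
          right_inv := by
            rintro ⟨f, c⟩
            simp }
      refine ⟨(stirEquiv hk).symm.trans (mid.trans (forEquiv k n)), ?_⟩
      intro w'
      obtain ⟨wp, hwp⟩ : ∃ wp, (stirEquiv hk).symm w' = wp := ⟨_, rfl⟩
      obtain ⟨w, p⟩ := wp
      have hw' : w' = stirEquiv hk (w, p) := by rw [← hwp, Equiv.apply_symm_apply]
      subst hw'
      have hL : lapStat k (n + 1) ((stirEquiv hk) (w, p)).1
          = if p ∈ badF k n w.1 then lapStat k n w.1 else lapStat k n w.1 + 1 := by
        have h1 : ((stirEquiv hk) (w, p)).1 = insFun k n w.1 p := rfl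
        rw [h1, lap_insFun hk w.1 p]
        by_cases hb : p ∈ badF k n w.1
        · rw [if_pos (mem_badF.mp hb), if_pos hb]
        · rw [if_neg (fun hc => hb (mem_badF.mpr hc)), if_neg hb]
      have hE : (((stirEquiv hk).symm.trans (mid.trans (forEquiv k n))) ((stirEquiv hk) (w, p)))
          = forEquiv k n (e w, σ w p) := by
        simp only [Equiv.trans_apply, Equiv.symm_apply_apply]
        rfl
      rw [hL, hE]
      rw [show lleafStat ((forEquiv k n) ((e w), σ w p)).1
          = if σ w p ∈ badO k n (e w).1 then lleafStat (e w).1 else lleafStat (e w).1 + 1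
        from lleaf_extF (e w).1 (σ w p)]
      by_cases hb : p ∈ badF k n w.1
      · rw [if_pos hb, if_pos ((hσ w p).mp hb), he w]
      · rw [if_neg hb, if_neg (fun hc => hb ((hσ w p).mpr hc)), he w]

end Main

end SFB

/-- The number of `k`-Stirling permutations of order `n` equals the number of increasing
pruned even `k`-ary forests on `{1,…,n}`; moreover there is a bijection `ξ` between them
with `lap(π) = lleaf(ξ(π))`. -/
theorem stirling_forest_bijection (n k : ℕ) (hn : 1 ≤ n) (hk : 1 ≤ k) :
    Nat.card {w : Fin (k * n) → Fin n // IsKStirling k n w} =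
      Nat.card {f : Fin n → Option (Fin n × Fin k) // IsForest f} ∧
    ∃ e : {w : Fin (k * n) → Fin n // IsKStirling k n w} ≃
        {f : Fin n → Option (Fin n × Fin k) // IsForest f},
      ∀ w, lapStat k n w.1 = lleafStat (e w).1 := by
  obtain ⟨e, he⟩ := SFB.main_induction k hk n
  exact ⟨Nat.card_congr e, e, he⟩

end
end
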